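/- arXiv:1904.08832 — 5 statements merged into one kernel-verified Lean document; each statement's English description precedes it below -/
import Mathlib

section
/- Let ψ_{AB} be a bipartite density operator on A⊗B whose marginals ψ_A and ψ_B are both maximally mixed (i.e., ψ_A = Id/d_A and ψ_B = Id/d_B). Then there exist standard orthonormal bases {X_α} of M(A) and {Y_β} of M(B) such that Tr((X_α ⊗ Y_β) ψ_{AB}) = 0 whenever α ≠ β. -/
open Matrix Kronecker
open scoped ComplexOrder

noncomputable section

/-- The normalized Hilbert–Schmidt inner ℝ product `⟨P,Q⟩ = (1/d) Tr(P† Q)` on `M_d`. -/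
def innerN (d : ℕ) (P Q : Matrix (Fin d) (Fin d) ℂ) : ℂ :=
  Matrix.trace (Pᴴ * Q) / (d : ℂ)

/-- A standard orthonormal basis of `M_d`. -/
def IsStdONB (d : ℕ) (B : Fin (d ^ 2) → Matrix (Fin d) (Fin d) ℂ) : Prop :=
  (∀ i, (B i).IsHermitian) ∧
  (∀ i : Fin (d ^ 2), (i : ℕ) = 0 → B i = 1) ∧
  (∀ i j, innerN d (B i) (B j) = if i = j then 1 else 0) ∧
  Submodule.span ℂ (Set.range B) = ⊤

open Module

section SVD

variable {V W : Type*} [NormedAddCommGroup V] [InnerProductSpace ℝ V] [FiniteDimensional ℝ V]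
  [NormedAddCommGroup W] [InnerProductSpace ℝ W] [FiniteDimensional ℝ W]

/-- SVD, case `n ≤ m`. -/
theorem svd_le {n m : ℕ} (hn : finrank ℝ V = n) (hm : finrank ℝ W = m) (hnm : n ≤ m)
    (L : V →ₗ[ℝ] W) :
    ∃ (x : OrthonormalBasis (Fin n) ℝ V) (y : OrthonormalBasis (Fin m) ℝ W),
      ∀ (i : Fin n) (j : Fin m), (i : ℕ) ≠ (j : ℕ) → (inner ℝ (L (x i)) (y j) : ℝ) = 0 := by
  have hsym : (LinearMap.adjoint L ∘ₗ L).IsSymmetric := by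
    intro u v
    simp [LinearMap.adjoint_inner_left, LinearMap.adjoint_inner_right]
  set x := hsym.eigenvectorBasis hn with hx
  have horth : ∀ i i' : Fin n, i ≠ i' → (inner ℝ (L (x i)) (L (x i')) : ℝ) = 0 := by
    intro i i' h
    have h1 : (inner ℝ ((LinearMap.adjoint L ∘ₗ L) (x i)) (x i') : ℝ)
        = inner ℝ (L (x i)) (L (x i')) := by
      simp [LinearMap.adjoint_inner_left]
    rw [hsym.apply_eigenvectorBasis] at h1
    rw [← h1, real_inner_smul_left]
    simp [x.orthonormal.2 h]
    exact Or.inr (x.orthonormal.2 h)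
  classical
  set u : Fin m → W := fun j => if h : (j : ℕ) < n then L (x ⟨j, h⟩) else 0 with hu
  have huorth : ∀ j k : Fin m, j ≠ k → (inner ℝ (u j) (u k) : ℝ) = 0 := by
    intro j k hjk
    rw [hu]
    by_cases h1 : (j : ℕ) < n
    · by_cases h2 : (k : ℕ) < n
      · simp only [dif_pos h1, dif_pos h2]
        exact horth _ _ (by simp only [ne_eq, Fin.mk.injEq]; exact fun h => hjk (Fin.ext h))
      · simp [dif_neg h2]
    · simp [dif_neg h1]
  set v : Fin m → W := fun j => ‖u j‖⁻¹ • u j with hv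
  set s : Set (Fin m) := {j | u j ≠ 0} with hs
  have hvon : Orthonormal ℝ (s.restrict v) := by
    rw [orthonormal_iff_ite]
    rintro ⟨j, hj⟩ ⟨k, hk⟩
    by_cases hjk : j = k
    · subst hjk
      rw [if_pos (Subtype.ext rfl)]
      simp only [Set.restrict_apply, Set.restrict, hv]
      rw [real_inner_smul_left, real_inner_smul_right, real_inner_self_eq_norm_sq]
      have := norm_ne_zero_iff.mpr (show u j ≠ 0 from hj)
      field_simp
    · rw [if_neg (fun h => hjk (congrArg Subtype.val h))]
      simp only [Set.restrict_apply, Set.restrict, hv]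
      rw [real_inner_smul_left, real_inner_smul_right, huorth _ _ hjk]
      ring
  obtain ⟨y, hy⟩ := hvon.exists_orthonormalBasis_extension_of_card_eq (by simp [hm])
  refine ⟨x, y, ?_⟩
  intro i j hij
  by_cases hLz : L (x i) = 0
  · simp [hLz]
  · have him : (i : ℕ) < m := lt_of_lt_of_le i.isLt hnm
    set j₀ : Fin m := ⟨i, him⟩ with hj₀
    have huj₀ : u j₀ = L (x i) := by
      rw [hu]; simp only [dif_pos (show ((j₀ : Fin m) : ℕ) < n from i.isLt)]; rfl
    have hj₀s : j₀ ∈ s := by rw [hs]; simp only [Set.mem_setOf_eq, huj₀]; exact hLz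
    have hyj₀ : y j₀ = ‖L (x i)‖⁻¹ • L (x i) := by
      rw [hy j₀ hj₀s, hv]; simp only [huj₀]
    have hLxi : L (x i) = ‖L (x i)‖ • y j₀ := by
      rw [hyj₀, smul_smul, mul_inv_cancel₀ (norm_ne_zero_iff.mpr hLz), one_smul]
    rw [hLxi, real_inner_smul_left, y.orthonormal.2 (by simp only [hj₀, ne_eq, Fin.ext_iff]; omega),
      mul_zero]

theorem svd_general {n m : ℕ} (hn : finrank ℝ V = n) (hm : finrank ℝ W = m)
    (L : V →ₗ[ℝ] W) :
    ∃ (x : OrthonormalBasis (Fin n) ℝ V) (y : OrthonormalBasis (Fin m) ℝ W),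
      ∀ (i : Fin n) (j : Fin m), (i : ℕ) ≠ (j : ℕ) → (inner ℝ (L (x i)) (y j) : ℝ) = 0 := by
  rcases le_total n m with h | h
  · exact svd_le hn hm h L
  · obtain ⟨y, x, hxy⟩ := svd_le hm hn h (LinearMap.adjoint L)
    refine ⟨x, y, fun i j hij => ?_⟩
    have := hxy j i (Ne.symm hij)
    rw [LinearMap.adjoint_inner_left] at this
    rwa [real_inner_comm]

theorem svd_with_unit {n m : ℕ} (hn : finrank ℝ V = n) (hm : finrank ℝ W = m)
    (L : V →ₗ[ℝ] W) (u : V) (w : W) (hu : ‖u‖ = 1) (hw : ‖w‖ = 1)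
    (hLu : L u = w) (hLadj : ∀ v : V, (inner ℝ u v : ℝ) = 0 → (inner ℝ (L v) w : ℝ) = 0) :
    ∃ (x : OrthonormalBasis (Fin n) ℝ V) (y : OrthonormalBasis (Fin m) ℝ W),
      (∀ i : Fin n, (i : ℕ) = 0 → x i = u) ∧ (∀ j : Fin m, (j : ℕ) = 0 → y j = w) ∧
      ∀ (i : Fin n) (j : Fin m), (i : ℕ) ≠ (j : ℕ) → (inner ℝ (L (x i)) (y j) : ℝ) = 0 := by
  classical
  have hu0 : u ≠ 0 := fun h => by simp [h] at hu
  have hw0 : w ≠ 0 := fun h => by simp [h] at hw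
  set V' := (ℝ ∙ u)ᗮ with hV'
  set W' := (ℝ ∙ w)ᗮ with hW'
  have hinner_u : ∀ v : V, v ∈ V' → (inner ℝ u v : ℝ) = 0 := fun v hv =>
    (Submodule.mem_orthogonal _ _).mp hv u (Submodule.mem_span_singleton_self u)
  have hinner_w : ∀ z : W, z ∈ W' → (inner ℝ w z : ℝ) = 0 := fun z hz =>
    (Submodule.mem_orthogonal _ _).mp hz w (Submodule.mem_span_singleton_self w)
  have hmaps : ∀ v ∈ V', L v ∈ W' := by
    intro v hv
    rw [hW', Submodule.mem_orthogonal]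
    intro z hz
    obtain ⟨c, rfl⟩ := Submodule.mem_span_singleton.mp hz
    rw [real_inner_smul_left, real_inner_comm, hLadj v (hinner_u v hv), mul_zero]
  set L' : V' →ₗ[ℝ] W' := L.restrict hmaps with hL'
  have h1u : finrank ℝ (ℝ ∙ u) = 1 := finrank_span_singleton hu0
  have h2u := Submodule.finrank_add_finrank_orthogonal (𝕜 := ℝ) (E := V) (ℝ ∙ u)
  rw [h1u, hn] at h2u
  have h1w : finrank ℝ (ℝ ∙ w) = 1 := finrank_span_singleton hw0
  have h2w := Submodule.finrank_add_finrank_orthogonal (𝕜 := ℝ) (E := W) (ℝ ∙ w)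
  rw [h1w, hm] at h2w
  have hnV : finrank ℝ V' = n - 1 := by rw [hV']; omega
  have hmW : finrank ℝ W' = m - 1 := by rw [hW']; omega
  have hn1 : 1 ≤ n := by omega
  have hm1 : 1 ≤ m := by omega
  obtain ⟨x', y', hxy'⟩ := svd_general hnV hmW L'
  set xf : Fin n → V := fun i =>
    if h : (i : ℕ) = 0 then u else ↑(x' ⟨(i : ℕ) - 1, by omega⟩) with hxf
  set yf : Fin m → W := fun j =>
    if h : (j : ℕ) = 0 then w else ↑(y' ⟨(j : ℕ) - 1, by omega⟩) with hyf
  have hxforth : Orthonormal ℝ xf := by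
    rw [orthonormal_iff_ite]
    intro i j
    rw [hxf]
    by_cases hi : (i : ℕ) = 0 <;> by_cases hj : (j : ℕ) = 0
    · simp only [dif_pos hi, dif_pos hj]
      rw [if_pos (Fin.ext (hi.trans hj.symm)), real_inner_self_eq_norm_mul_norm, hu, mul_one]
    · simp only [dif_pos hi, dif_neg hj]
      rw [if_neg (show i ≠ j from fun h => hj (by rw [← h]; exact hi)), hinner_u _ (x' _).2]
    · simp only [dif_neg hi, dif_pos hj]
      rw [if_neg (show i ≠ j from fun h => hi (by rw [h]; exact hj)), real_inner_comm,
        hinner_u _ (x' _).2]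
    · simp only [dif_neg hi, dif_neg hj]
      rw [← Submodule.coe_inner, orthonormal_iff_ite.mp x'.orthonormal]
      have hval : ((⟨(i : ℕ) - 1, by omega⟩ : Fin (n - 1)) = ⟨(j : ℕ) - 1, by omega⟩) ↔ i = j := by
        rw [Fin.mk_eq_mk, Fin.ext_iff]; omega
      by_cases hij : i = j
      · rw [if_pos (hval.mpr hij), if_pos hij]
      · rw [if_neg (fun h => hij (hval.mp h)), if_neg hij]
  have hyforth : Orthonormal ℝ yf := by
    rw [orthonormal_iff_ite]
    intro i j
    rw [hyf]
    by_cases hi : (i : ℕ) = 0 <;> by_cases hj : (j : ℕ) = 0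
    · simp only [dif_pos hi, dif_pos hj]
      rw [if_pos (Fin.ext (hi.trans hj.symm)), real_inner_self_eq_norm_mul_norm, hw, mul_one]
    · simp only [dif_pos hi, dif_neg hj]
      rw [if_neg (show i ≠ j from fun h => hj (by rw [← h]; exact hi)), hinner_w _ (y' _).2]
    · simp only [dif_neg hi, dif_pos hj]
      rw [if_neg (show i ≠ j from fun h => hi (by rw [h]; exact hj)), real_inner_comm,
        hinner_w _ (y' _).2]
    · simp only [dif_neg hi, dif_neg hj]
      rw [← Submodule.coe_inner, orthonormal_iff_ite.mp y'.orthonormal]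
      have hval : ((⟨(i : ℕ) - 1, by omega⟩ : Fin (m - 1)) = ⟨(j : ℕ) - 1, by omega⟩) ↔ i = j := by
        rw [Fin.mk_eq_mk, Fin.ext_iff]; omega
      by_cases hij : i = j
      · rw [if_pos (hval.mpr hij), if_pos hij]
      · rw [if_neg (fun h => hij (hval.mp h)), if_neg hij]
  obtain ⟨x, hxev⟩ := (hxforth.comp _ Subtype.val_injective :
      Orthonormal ℝ (Set.univ.restrict xf)).exists_orthonormalBasis_extension_of_card_eq
      (by simp [hn])
  obtain ⟨y, hyev⟩ := (hyforth.comp _ Subtype.val_injective :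
      Orthonormal ℝ (Set.univ.restrict yf)).exists_orthonormalBasis_extension_of_card_eq
      (by simp [hm])
  have hxeq : ∀ i, x i = xf i := fun i => hxev i (Set.mem_univ i)
  have hyeq : ∀ j, y j = yf j := fun j => hyev j (Set.mem_univ j)
  refine ⟨x, y, fun i hi => by rw [hxeq, hxf]; simp [hi],
    fun j hj => by rw [hyeq, hyf]; simp [hj], ?_⟩
  intro i j hij
  rw [hxeq, hyeq, hxf, hyf]
  by_cases hi : (i : ℕ) = 0 <;> by_cases hj : (j : ℕ) = 0
  · omega
  · simp only [dif_pos hi, dif_neg hj]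
    rw [hLu, hinner_w _ (y' _).2]
  · simp only [dif_neg hi, dif_pos hj]
    exact hLadj _ (hinner_u _ (x' _).2)
  · simp only [dif_neg hi, dif_neg hj]
    have hres : L ↑(x' ⟨(i : ℕ) - 1, by omega⟩) = ↑(L' (x' ⟨(i : ℕ) - 1, by omega⟩)) := rfl
    rw [hres, ← Submodule.coe_inner]
    exact hxy' _ _ (by simp only; omega)

end SVD

section Phi

variable {d : ℕ}

/-- Real coordinates to Hermitian matrix. -/
def Phi (d : ℕ) (x : EuclideanSpace ℝ (Fin d × Fin d)) : Matrix (Fin d) (Fin d) ℂ :=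
  Matrix.of fun j k =>
    if j = k then (x (j, j) : ℂ)
    else if (j : ℕ) < (k : ℕ) then (Real.sqrt 2 : ℂ)⁻¹ * (x (j, k) + Complex.I * x (k, j))
    else (Real.sqrt 2 : ℂ)⁻¹ * (x (k, j) - Complex.I * x (j, k))

theorem Phi_apply (x : EuclideanSpace ℝ (Fin d × Fin d)) (j k : Fin d) :
    Phi d x j k =
    if j = k then (x (j, j) : ℂ)
    else if (j : ℕ) < (k : ℕ) then (Real.sqrt 2 : ℂ)⁻¹ * (x (j, k) + Complex.I * x (k, j))
    else (Real.sqrt 2 : ℂ)⁻¹ * (x (k, j) - Complex.I * x (j, k)) := rfl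

theorem Phi_isHermitian (x : EuclideanSpace ℝ (Fin d × Fin d)) : (Phi d x).IsHermitian := by
  rw [Matrix.IsHermitian]
  ext j k
  simp only [Matrix.conjTranspose_apply, Phi_apply]
  rcases lt_trichotomy (k : ℕ) (j : ℕ) with h | h | h
  · rw [if_neg (fun hh => by omega), if_pos h, if_neg (fun hh : j = k => by rw [hh] at h; omega),
      if_neg (by omega)]
    simp only [Complex.star_def, _root_.map_mul, map_add, map_sub, map_inv₀,
      Complex.conj_ofReal, Complex.conj_I]
    ring
  · have : j = k := Fin.ext (by omega)
    subst this
    simp [Complex.star_def, Complex.conj_ofReal]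
  · rw [if_neg (fun hh : k = j => by rw [hh] at h; omega), if_neg (by omega),
      if_neg (fun hh : j = k => by rw [hh] at h; omega), if_pos h]
    simp only [Complex.star_def, _root_.map_mul, map_add, map_sub, map_inv₀,
      Complex.conj_ofReal, Complex.conj_I]
    ring

theorem Phi_add (x y : EuclideanSpace ℝ (Fin d × Fin d)) :
    Phi d (x + y) = Phi d x + Phi d y := by
  ext j k
  simp only [Phi_apply, Matrix.add_apply, PiLp.add_apply, Complex.ofReal_add]
  split_ifs <;> push_cast <;> ring

theorem Phi_smul (r : ℝ) (x : EuclideanSpace ℝ (Fin d × Fin d)) :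
    Phi d (r • x) = (r : ℂ) • Phi d x := by
  ext j k
  simp only [Phi_apply, Matrix.smul_apply, PiLp.smul_apply, smul_eq_mul, Complex.ofReal_mul,
    Complex.real_smul]
  split_ifs <;> push_cast <;> ring

/-- The diagonal indicator vector. -/
def diagv (d : ℕ) : EuclideanSpace ℝ (Fin d × Fin d) := WithLp.toLp 2 (fun p => if p.1 = p.2 then 1 else 0)

theorem Phi_diagv : Phi d (diagv d) = 1 := by
  ext j k
  simp only [Phi_apply, diagv, Matrix.one_apply]
  split_ifs with h h1 h2 <;> simp_all <;> omega

theorem norm_diagv : ‖diagv d‖ = Real.sqrt d := by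
  rw [EuclideanSpace.norm_eq]
  congr 1
  rw [Fintype.sum_prod_type]
  have : ∀ j : Fin d, ∑ k : Fin d, ‖diagv d (j, k)‖ ^ 2 = 1 := by
    intro j
    rw [Finset.sum_eq_single j]
    · simp [diagv]
    · intro k _ hk; simp [diagv, fun h : j = k => hk h.symm]
      intro h; exact absurd h.symm hk
    · simp
  rw [Finset.sum_congr rfl (fun j _ => this j)]
  simp

theorem trace_Phi_mul (x y : EuclideanSpace ℝ (Fin d × Fin d)) :
    (Phi d x * Phi d y).trace = ((∑ p : Fin d × Fin d, x p * y p : ℝ) : ℂ) := by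
  have key : ∀ j k : Fin d,
      Phi d x j k * Phi d y k j + Phi d x k j * Phi d y j k =
      ((x (j, k) * y (j, k) + x (k, j) * y (k, j) : ℝ) : ℂ) := by
    intro j k
    have h2 : ((Real.sqrt 2 : ℝ) : ℂ)⁻¹ ^ 2 = 2⁻¹ := by
      rw [sq, ← mul_inv, ← Complex.ofReal_mul, Real.mul_self_sqrt (by norm_num)]
      norm_num
    rcases lt_trichotomy (j : ℕ) (k : ℕ) with h | h | h
    · rw [Phi_apply, Phi_apply, Phi_apply, Phi_apply,
        if_neg (fun hh : j = k => by rw [hh] at h; omega), if_pos h,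
        if_neg (fun hh : k = j => by rw [hh] at h; omega), if_neg (by omega),
        if_neg (fun hh : k = j => by rw [hh] at h; omega), if_neg (by omega),
        if_neg (fun hh : j = k => by rw [hh] at h; omega), if_pos h]
      push_cast
      ring_nf
      rw [Complex.I_sq]
      simp only [h2]
      ring
    · have : j = k := Fin.ext h
      subst this
      rw [Phi_apply, if_pos rfl, Phi_apply, if_pos rfl]
      push_cast
      ring
    · rw [Phi_apply, Phi_apply, Phi_apply, Phi_apply,
        if_neg (fun hh : j = k => by rw [hh] at h; omega), if_neg (by omega),
        if_neg (fun hh : k = j => by rw [hh] at h; omega), if_pos h,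
        if_neg (fun hh : k = j => by rw [hh] at h; omega), if_pos h,
        if_neg (fun hh : j = k => by rw [hh] at h; omega), if_neg (by omega)]
      push_cast
      ring_nf
      rw [Complex.I_sq]
      simp only [h2]
      ring
  have expand : (Phi d x * Phi d y).trace = ∑ j : Fin d, ∑ k : Fin d, Phi d x j k * Phi d y k j := by
    simp [Matrix.trace, Matrix.diag, Matrix.mul_apply]
  have double : (2 : ℂ) * (Phi d x * Phi d y).trace =
      (2 : ℂ) * ((∑ p : Fin d × Fin d, x p * y p : ℝ) : ℂ) := by
    rw [expand]
    have swap : ∑ j : Fin d, ∑ k : Fin d, Phi d x j k * Phi d y k j =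
        ∑ j : Fin d, ∑ k : Fin d, Phi d x k j * Phi d y j k := Finset.sum_comm
    calc (2:ℂ) * ∑ j : Fin d, ∑ k : Fin d, Phi d x j k * Phi d y k j
        = ∑ j : Fin d, ∑ k : Fin d, (Phi d x j k * Phi d y k j + Phi d x k j * Phi d y j k) := by
          rw [two_mul]
          nth_rewrite 2 [swap]
          rw [← Finset.sum_add_distrib]
          simp only [← Finset.sum_add_distrib]
      _ = ∑ j : Fin d, ∑ k : Fin d, ((x (j, k) * y (j, k) + x (k, j) * y (k, j) : ℝ) : ℂ) := by
          congr 1; ext j; congr 1; ext k; exact key j k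
      _ = (2 : ℂ) * ((∑ p : Fin d × Fin d, x p * y p : ℝ) : ℂ) := by
          push_cast
          simp only [Finset.sum_add_distrib]
          rw [two_mul]
          congr 1
          · exact (Fintype.sum_prod_type (f := fun p : Fin d × Fin d => (x p : ℂ) * (y p : ℂ))).symm
          · rw [Finset.sum_comm]
            exact (Fintype.sum_prod_type (f := fun p : Fin d × Fin d => (x p : ℂ) * (y p : ℂ))).symm
  have := mul_left_cancel₀ (two_ne_zero' ℂ) double
  exact this

theorem Phi_surj (H : Matrix (Fin d) (Fin d) ℂ) (hH : H.IsHermitian) :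
    ∃ x : EuclideanSpace ℝ (Fin d × Fin d), Phi d x = H := by
  have hconj : ∀ j k : Fin d, (starRingEnd ℂ) (H j k) = H k j := by
    intro j k
    have := congrFun (congrFun hH.symm k) j
    simpa [Matrix.conjTranspose_apply] using this.symm
  refine ⟨WithLp.toLp 2 (fun p => if p.1 = p.2 then (H p.1 p.1).re
    else if (p.1 : ℕ) < (p.2 : ℕ) then Real.sqrt 2 * (H p.1 p.2).re
    else Real.sqrt 2 * (H p.2 p.1).im), ?_⟩
  have hs2 : ((Real.sqrt 2 : ℝ) : ℂ) ≠ 0 := by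
    norm_cast
    positivity
  ext j k
  rw [Phi_apply]
  rcases lt_trichotomy (j : ℕ) (k : ℕ) with h | h | h
  · rw [if_neg (fun hh : j = k => by rw [hh] at h; omega), if_pos h]
    simp only [if_pos rfl, if_neg (fun hh : j = k => by rw [hh] at h; omega), if_pos h,
      if_neg (fun hh : k = j => by rw [hh] at h; omega), if_neg (show ¬(k:ℕ) < (j:ℕ) by omega)]
    rw [inv_mul_eq_iff_eq_mul₀ hs2]
    conv_rhs => rw [← Complex.re_add_im (H j k)]
    push_cast
    ring
  · have : j = k := Fin.ext h
    subst this
    rw [if_pos rfl]; simp only [WithLp.ofLp_toLp]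
    rw [if_pos trivial]
    have := hconj j j
    rw [Complex.conj_eq_iff_re] at this
    have h3 : H ((j, j) : Fin d × Fin d).1 ((j, j) : Fin d × Fin d).1 = H j j := rfl
    exact this
  · rw [if_neg (fun hh : j = k => by rw [hh] at h; omega), if_neg (by omega)]
    simp only [if_neg (fun hh : k = j => by rw [hh] at h; omega), if_pos h,
      if_neg (fun hh : j = k => by rw [hh] at h; omega), if_neg (show ¬(j:ℕ) < (k:ℕ) by omega)]
    have hc := hconj k j
    rw [Complex.ext_iff] at hc
    have hrc : (H k j).re = (H j k).re := by simpa using hc.1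
    have hic : -(H k j).im = (H j k).im := by simpa using hc.2
    rw [inv_mul_eq_iff_eq_mul₀ hs2]
    conv_rhs => rw [← Complex.re_add_im (H j k), ← hrc, ← hic]
    push_cast
    ring

theorem finrank_E (d : ℕ) : finrank ℝ (EuclideanSpace ℝ (Fin d × Fin d)) = d ^ 2 := by
  simp [finrank_euclideanSpace, sq]

theorem real_smul_matrix {d : ℕ} (r : ℝ) (M : Matrix (Fin d) (Fin d) ℂ) :
    r • M = (r : ℂ) • M := by
  ext j k; simp [Complex.real_smul]

/-- `Phi` as a linear map. -/
def PhiL (d : ℕ) : EuclideanSpace ℝ (Fin d × Fin d) →ₗ[ℝ] Matrix (Fin d) (Fin d) ℂ where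
  toFun := Phi d
  map_add' := Phi_add
  map_smul' := fun r x => by
    simp only [RingHom.id_apply]
    change Phi d (r • x) = r • Phi d x
    rw [Phi_smul, real_smul_matrix]

/-- norm of the uniform unit vector. -/
def uvec (d : ℕ) : EuclideanSpace ℝ (Fin d × Fin d) := (Real.sqrt d)⁻¹ • diagv d

theorem norm_uvec {d : ℕ} (hd : 0 < d) : ‖uvec d‖ = 1 := by
  rw [uvec, norm_smul, norm_diagv]
  have : Real.sqrt d ≠ 0 := by positivity
  simp [abs_of_nonneg (Real.sqrt_nonneg (d:ℝ)), inv_mul_cancel₀ this]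

theorem inner_eu {d : ℕ} (x y : EuclideanSpace ℝ (Fin d × Fin d)) :
    (inner ℝ x y : ℝ) = ∑ p : Fin d × Fin d, x p * y p := by
  rw [PiLp.inner_apply]
  simp [mul_comm]

/-- Building a standard ONB from an orthonormal basis whose 0th element is `uvec`. -/
theorem isStdONB_of_onb {d : ℕ} (hd : 0 < d)
    (b : OrthonormalBasis (Fin (d ^ 2)) ℝ (EuclideanSpace ℝ (Fin d × Fin d)))
    (hb0 : ∀ i : Fin (d ^ 2), (i : ℕ) = 0 → b i = uvec d) :
    IsStdONB d (fun i => Phi d ((Real.sqrt d : ℝ) • b i)) := by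
  have hsd : (Real.sqrt d : ℝ) ≠ 0 := by positivity
  refine ⟨fun i => Phi_isHermitian _, ?_, ?_, ?_⟩
  · intro i hi
    show Phi d ((Real.sqrt d : ℝ) • b i) = 1
    rw [hb0 i hi, uvec, smul_smul, mul_inv_cancel₀ hsd, one_smul, Phi_diagv]
  · intro i j
    rw [innerN, (Phi_isHermitian _).eq, trace_Phi_mul]
    have : ∑ p : Fin d × Fin d, ((Real.sqrt d : ℝ) • b i) p * ((Real.sqrt d : ℝ) • b j) p
        = (d : ℝ) * (inner ℝ (b i) (b j) : ℝ) := by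
      rw [inner_eu, Finset.mul_sum]
      apply Finset.sum_congr rfl
      intro p _
      simp only [PiLp.smul_apply, smul_eq_mul]
      have hss : Real.sqrt d * Real.sqrt d = (d : ℝ) := Real.mul_self_sqrt (Nat.cast_nonneg d)
      linear_combination (b i p * b j p) * hss
    rw [this, orthonormal_iff_ite.mp b.orthonormal i j]
    have hdc : ((d : ℝ) : ℂ) = (d : ℂ) := by norm_cast
    have hdne : (d : ℂ) ≠ 0 := Nat.cast_ne_zero.mpr hd.ne'
    by_cases hij : i = j
    · rw [if_pos hij, if_pos hij]
      push_cast
      rw [mul_one, div_self hdne]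
    · rw [if_neg hij, if_neg hij]
      simp
  · rw [eq_top_iff]
    intro M _
    have hPhimem : ∀ x : EuclideanSpace ℝ (Fin d × Fin d),
        Phi d x ∈ Submodule.span ℂ (Set.range (fun i => Phi d ((Real.sqrt d : ℝ) • b i))) := by
      intro x
      have hx : x = ∑ i, (inner ℝ (b i) x : ℝ) • b i := (b.sum_repr' x).symm
      have hstep : Phi d x = ∑ i, ((inner ℝ (b i) x : ℝ) : ℂ) •
          ((((Real.sqrt d : ℝ) : ℂ))⁻¹ • Phi d ((Real.sqrt d : ℝ) • b i)) := by
        conv_lhs => rw [show Phi d x = PhiL d x from rfl, hx]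
        rw [map_sum]
        apply Finset.sum_congr rfl
        intro i _
        rw [_root_.map_smul, show (PhiL d) (b i) = Phi d (b i) from rfl, real_smul_matrix, Phi_smul]
        simp only [smul_smul]
        congr 1
        rw [inv_mul_cancel₀ (show (((Real.sqrt d : ℝ)) : ℂ) ≠ 0 by exact_mod_cast hsd), mul_one]
      rw [hstep]
      exact Submodule.sum_mem _ (fun i _ => Submodule.smul_mem _ _ (Submodule.smul_mem _ _
        (Submodule.subset_span (Set.mem_range_self i))))
    have h1 : (M + Mᴴ).IsHermitian := by
      rw [Matrix.IsHermitian, Matrix.conjTranspose_add, Matrix.conjTranspose_conjTranspose,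
        add_comm]
    have h2 : (Complex.I • (M - Mᴴ)).IsHermitian := by
      rw [Matrix.IsHermitian, Matrix.conjTranspose_smul, Matrix.conjTranspose_sub,
        Matrix.conjTranspose_conjTranspose]
      rw [Complex.star_def, Complex.conj_I, neg_smul, smul_sub, smul_sub, neg_sub]
    obtain ⟨x1, hx1⟩ := Phi_surj _ h1
    obtain ⟨x2, hx2⟩ := Phi_surj _ h2
    have hM : M = ((1:ℂ)/2) • Phi d x1 + (-(Complex.I/2)) • Phi d x2 := by
      rw [hx1, hx2]
      ext j k
      simp only [Matrix.add_apply, Matrix.smul_apply, Matrix.sub_apply,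
        Matrix.conjTranspose_apply, smul_eq_mul]
      ring_nf
      simp [Complex.I_sq]
      ring
    rw [hM]
    exact Submodule.add_mem _ (Submodule.smul_mem _ _ (hPhimem x1))
      (Submodule.smul_mem _ _ (hPhimem x2))

end Phi

section Kron

variable {dA dB : ℕ}

theorem trace_kron_mul (P : Matrix (Fin dA) (Fin dA) ℂ) (Q : Matrix (Fin dB) (Fin dB) ℂ)
    (ψ : Matrix (Fin dA × Fin dB) (Fin dA × Fin dB) ℂ) :
    ((P ⊗ₖ Q) * ψ).trace =
      ∑ a, ∑ b, ∑ a', ∑ b', P a a' * Q b b' * ψ (a', b') (a, b) := by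
  rw [Matrix.trace]
  simp only [Matrix.diag_apply, Matrix.mul_apply]
  rw [Fintype.sum_prod_type]
  apply Finset.sum_congr rfl; intro a _
  apply Finset.sum_congr rfl; intro b _
  rw [Fintype.sum_prod_type]
  apply Finset.sum_congr rfl; intro a' _
  apply Finset.sum_congr rfl; intro b' _
  rw [Matrix.kronecker_apply]

theorem trace_kron_one_right
    (ψ : Matrix (Fin dA × Fin dB) (Fin dA × Fin dB) ℂ)
    (hmargA : Matrix.of (fun a a' : Fin dA => ∑ b, ψ (a, b) (a', b)) =
      (dA : ℂ)⁻¹ • (1 : Matrix (Fin dA) (Fin dA) ℂ))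
    (P : Matrix (Fin dA) (Fin dA) ℂ) :
    ((P ⊗ₖ (1 : Matrix (Fin dB) (Fin dB) ℂ)) * ψ).trace = (dA : ℂ)⁻¹ * P.trace := by
  rw [trace_kron_mul]
  calc ∑ a, ∑ b, ∑ a', ∑ b', P a a' * (1 : Matrix (Fin dB) (Fin dB) ℂ) b b' * ψ (a', b') (a, b)
      = ∑ a, ∑ b, ∑ a', P a a' * ψ (a', b) (a, b) := by
        apply Finset.sum_congr rfl; intro a _
        apply Finset.sum_congr rfl; intro b _
        apply Finset.sum_congr rfl; intro a' _
        rw [Finset.sum_eq_single b]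
        · rw [Matrix.one_apply_eq, mul_one]
        · intro b' _ hb'
          rw [Matrix.one_apply_ne (Ne.symm hb'), mul_zero, zero_mul]
        · simp
    _ = ∑ a, ∑ a', P a a' * ∑ b, ψ (a', b) (a, b) := by
        apply Finset.sum_congr rfl; intro a _
        rw [Finset.sum_comm]
        apply Finset.sum_congr rfl; intro a' _
        rw [Finset.mul_sum]
    _ = ∑ a, ∑ a', P a a' * ((dA : ℂ)⁻¹ * if a' = a then 1 else 0) := by
        apply Finset.sum_congr rfl; intro a _
        apply Finset.sum_congr rfl; intro a' _
        have := congrFun (congrFun hmargA a') a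
        simp only [Matrix.of_apply, Matrix.smul_apply, Matrix.one_apply, smul_eq_mul] at this
        rw [this]
    _ = (dA : ℂ)⁻¹ * P.trace := by
        rw [Matrix.trace, Finset.mul_sum]
        apply Finset.sum_congr rfl; intro a _
        rw [Finset.sum_eq_single a]
        · rw [if_pos rfl, mul_one, Matrix.diag_apply]; ring
        · intro a' _ ha'
          rw [if_neg ha', mul_zero, mul_zero]
        · simp

theorem trace_kron_one_left
    (ψ : Matrix (Fin dA × Fin dB) (Fin dA × Fin dB) ℂ)
    (hmargB : Matrix.of (fun b b' : Fin dB => ∑ a, ψ (a, b) (a, b')) =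
      (dB : ℂ)⁻¹ • (1 : Matrix (Fin dB) (Fin dB) ℂ))
    (Q : Matrix (Fin dB) (Fin dB) ℂ) :
    (((1 : Matrix (Fin dA) (Fin dA) ℂ) ⊗ₖ Q) * ψ).trace = (dB : ℂ)⁻¹ * Q.trace := by
  rw [trace_kron_mul]
  calc ∑ a, ∑ b, ∑ a', ∑ b', (1 : Matrix (Fin dA) (Fin dA) ℂ) a a' * Q b b' * ψ (a', b') (a, b)
      = ∑ a, ∑ b, ∑ b', Q b b' * ψ (a, b') (a, b) := by
        apply Finset.sum_congr rfl; intro a _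
        apply Finset.sum_congr rfl; intro b _
        rw [Finset.sum_eq_single a]
        · apply Finset.sum_congr rfl; intro b' _
          rw [Matrix.one_apply_eq, one_mul]
        · intro a' _ ha'
          apply Finset.sum_eq_zero
          intro b' _
          rw [Matrix.one_apply_ne (Ne.symm ha'), zero_mul, zero_mul]
        · simp
    _ = ∑ b, ∑ b', Q b b' * ∑ a, ψ (a, b') (a, b) := by
        rw [Finset.sum_comm]
        apply Finset.sum_congr rfl; intro b _
        rw [Finset.sum_comm]
        apply Finset.sum_congr rfl; intro b' _
        rw [Finset.mul_sum]
    _ = ∑ b, ∑ b', Q b b' * ((dB : ℂ)⁻¹ * if b' = b then 1 else 0) := by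
        apply Finset.sum_congr rfl; intro b _
        apply Finset.sum_congr rfl; intro b' _
        have := congrFun (congrFun hmargB b') b
        simp only [Matrix.of_apply, Matrix.smul_apply, Matrix.one_apply, smul_eq_mul] at this
        rw [this]
    _ = (dB : ℂ)⁻¹ * Q.trace := by
        rw [Matrix.trace, Finset.mul_sum]
        apply Finset.sum_congr rfl; intro b _
        rw [Finset.sum_eq_single b]
        · rw [if_pos rfl, mul_one, Matrix.diag_apply]; ring
        · intro b' _ hb'
          rw [if_neg hb', mul_zero, mul_zero]
        · simp

theorem kron_conjTranspose (P : Matrix (Fin dA) (Fin dA) ℂ) (Q : Matrix (Fin dB) (Fin dB) ℂ) :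
    (P ⊗ₖ Q)ᴴ = Pᴴ ⊗ₖ Qᴴ := by
  ext p q
  simp [Matrix.conjTranspose_apply, Matrix.kronecker_apply, mul_comm]

theorem trace_kron_real (ψ : Matrix (Fin dA × Fin dB) (Fin dA × Fin dB) ℂ)
    (hψ : ψ.IsHermitian) {P : Matrix (Fin dA) (Fin dA) ℂ} {Q : Matrix (Fin dB) (Fin dB) ℂ}
    (hP : P.IsHermitian) (hQ : Q.IsHermitian) :
    ((((P ⊗ₖ Q) * ψ).trace.re : ℝ) : ℂ) = ((P ⊗ₖ Q) * ψ).trace := by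
  rw [← Complex.conj_eq_iff_re]
  have : (starRingEnd ℂ) ((P ⊗ₖ Q) * ψ).trace = (((P ⊗ₖ Q) * ψ)ᴴ).trace := by
    rw [Matrix.trace_conjTranspose]
    rfl
  rw [this, Matrix.conjTranspose_mul, kron_conjTranspose, hψ.eq, hP.eq, hQ.eq,
    Matrix.trace_mul_comm]

theorem Phi_zero {d : ℕ} : Phi d 0 = 0 := by
  have := Phi_smul (d := d) 0 0
  rw [zero_smul] at this
  simpa using this

theorem trace_Phi {d : ℕ} (x : EuclideanSpace ℝ (Fin d × Fin d)) :
    (Phi d x).trace = ((∑ j : Fin d, x (j, j) : ℝ) : ℂ) := by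
  rw [Matrix.trace]
  push_cast
  apply Finset.sum_congr rfl
  intro j _
  rw [Matrix.diag_apply, Phi_apply, if_pos rfl]

theorem sum_diag_mul {d : ℕ} (w : EuclideanSpace ℝ (Fin d × Fin d)) :
    ∑ p : Fin d × Fin d, diagv d p * w p = ∑ j : Fin d, w (j, j) := by
  rw [Fintype.sum_prod_type]
  apply Finset.sum_congr rfl; intro j _
  rw [Finset.sum_eq_single j]
  · simp [diagv]
  · intro k _ hk
    simp only [diagv]
    rw [if_neg (show ¬((j, k) : Fin d × Fin d).1 = ((j, k) : Fin d × Fin d).2 from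
      fun h => hk (Eq.symm h)), zero_mul]
  · simp

/-- For a bipartite density operator with maximally mixed marginals, there are standard
orthonormal bases `{X_α}` of `M(A)` and `{Y_β}` of `M(B)` such that
`Tr((X_α ⊗ Y_β) ψ) = 0` whenever `α ≠ β`. -/
theorem exists_diagonalizing_bases (dA dB : ℕ) (hA : 0 < dA) (hB : 0 < dB)
    (ψ : Matrix (Fin dA × Fin dB) (Fin dA × Fin dB) ℂ)
    (hpsd : ψ.PosSemidef) (htr : ψ.trace = 1)
    (hmargA : Matrix.of (fun a a' : Fin dA => ∑ b, ψ (a, b) (a', b)) =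
      (dA : ℂ)⁻¹ • (1 : Matrix (Fin dA) (Fin dA) ℂ))
    (hmargB : Matrix.of (fun b b' : Fin dB => ∑ a, ψ (a, b) (a, b')) =
      (dB : ℂ)⁻¹ • (1 : Matrix (Fin dB) (Fin dB) ℂ)) :
    ∃ (X : Fin (dA ^ 2) → Matrix (Fin dA) (Fin dA) ℂ)
      (Y : Fin (dB ^ 2) → Matrix (Fin dB) (Fin dB) ℂ),
      IsStdONB dA X ∧ IsStdONB dB Y ∧
      ∀ (α : Fin (dA ^ 2)) (β : Fin (dB ^ 2)), (α : ℕ) ≠ (β : ℕ) →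
        Matrix.trace ((X α ⊗ₖ Y β) * ψ) = 0 := by
  classical
  have hsA : (Real.sqrt dA : ℝ) ≠ 0 := by positivity
  have hsB : (Real.sqrt dB : ℝ) ≠ 0 := by positivity
  have hssA : Real.sqrt dA * Real.sqrt dA = (dA : ℝ) := Real.mul_self_sqrt (Nat.cast_nonneg _)
  have hssB : Real.sqrt dB * Real.sqrt dB = (dB : ℝ) := Real.mul_self_sqrt (Nat.cast_nonneg _)
  set F : EuclideanSpace ℝ (Fin dA × Fin dA) → EuclideanSpace ℝ (Fin dB × Fin dB) → ℝ :=
    fun v w => (Real.sqrt dA * Real.sqrt dB) * (((Phi dA v ⊗ₖ Phi dB w) * ψ).trace).re with hF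
  have hF_add1 : ∀ v v' w, F (v + v') w = F v w + F v' w := by
    intro v v' w
    rw [hF]
    simp only
    rw [Phi_add, Matrix.add_kronecker, Matrix.add_mul, Matrix.trace_add, Complex.add_re]
    ring
  have hF_smul1 : ∀ (r : ℝ) v w, F (r • v) w = r * F v w := by
    intro r v w
    rw [hF]
    simp only
    rw [Phi_smul, Matrix.smul_kronecker, smul_mul_assoc, Matrix.trace_smul]
    simp only [smul_eq_mul, Complex.mul_re, Complex.ofReal_re, Complex.ofReal_im, zero_mul,
      sub_zero]
    ring
  have hF_add2 : ∀ v w w', F v (w + w') = F v w + F v w' := by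
    intro v w w'
    rw [hF]
    simp only
    rw [Phi_add, Matrix.kronecker_add, Matrix.add_mul, Matrix.trace_add, Complex.add_re]
    ring
  have hF_smul2 : ∀ (r : ℝ) v w, F v (r • w) = r * F v w := by
    intro r v w
    rw [hF]
    simp only
    rw [Phi_smul, Matrix.kronecker_smul, smul_mul_assoc, Matrix.trace_smul]
    simp only [smul_eq_mul, Complex.mul_re, Complex.ofReal_re, Complex.ofReal_im, zero_mul,
      sub_zero]
    ring
  -- F as linear in second slot
  set G : EuclideanSpace ℝ (Fin dA × Fin dA) → (EuclideanSpace ℝ (Fin dB × Fin dB) →ₗ[ℝ] ℝ) :=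
    fun v => { toFun := F v, map_add' := hF_add2 v, map_smul' := fun r w => hF_smul2 r v w } with hG
  set L : EuclideanSpace ℝ (Fin dA × Fin dA) →ₗ[ℝ] EuclideanSpace ℝ (Fin dB × Fin dB) :=
    { toFun := fun v => (EuclideanSpace.equiv (Fin dB × Fin dB) ℝ).symm
        (fun p => F v (EuclideanSpace.single p 1)),
      map_add' := by
        intro v v'
        ext p
        show F (v + v') (EuclideanSpace.single p 1) =
          F v (EuclideanSpace.single p 1) + F v' (EuclideanSpace.single p 1)
        exact hF_add1 v v' _
      map_smul' := by
        intro r v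
        ext p
        show F (r • v) (EuclideanSpace.single p 1) = r * F v (EuclideanSpace.single p 1)
        exact hF_smul1 r v _ } with hL
  have hLapply : ∀ v p, L v p = F v (EuclideanSpace.single p 1) := fun v p => rfl
  have hLinner : ∀ v w, (inner ℝ (L v) w : ℝ) = F v w := by
    intro v w
    rw [inner_eu]
    calc ∑ p, L v p * w p = ∑ p, F v (w p • EuclideanSpace.single p 1) := by
          apply Finset.sum_congr rfl; intro p _
          rw [hF_smul2, hLapply]
          exact mul_comm _ _
      _ = F v (∑ p, w p • EuclideanSpace.single p 1) :=
          (map_sum (G v) (fun p => w p • EuclideanSpace.single p 1) Finset.univ).symm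
      _ = F v w := by
          congr 1
          have := (EuclideanSpace.basisFun (Fin dB × Fin dB) ℝ).sum_repr w
          simpa [EuclideanSpace.basisFun_apply, EuclideanSpace.basisFun_repr] using this
  have huin : ∀ (d : ℕ) (w : EuclideanSpace ℝ (Fin d × Fin d)),
      (inner ℝ (uvec d) w : ℝ) = (Real.sqrt d)⁻¹ * ∑ j, w (j, j) := by
    intro d w
    rw [uvec, real_inner_smul_left, inner_eu, sum_diag_mul]
  have hFu : ∀ w, F (uvec dA) w = (Real.sqrt dB)⁻¹ * ∑ j, w (j, j) := by
    intro w
    rw [hF]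
    simp only
    have h1 : Phi dA (uvec dA) = (((Real.sqrt dA)⁻¹ : ℝ) : ℂ) • 1 := by
      rw [uvec, Phi_smul, Phi_diagv]
    rw [h1, Matrix.smul_kronecker, smul_mul_assoc, Matrix.trace_smul,
      trace_kron_one_left ψ hmargB, trace_Phi]
    have hc : (((Real.sqrt dA)⁻¹ : ℝ) : ℂ) • ((dB : ℂ)⁻¹ * ((∑ j, w (j, j) : ℝ) : ℂ)) =
        (((Real.sqrt dA)⁻¹ * (dB : ℝ)⁻¹ * ∑ j, w (j, j) : ℝ) : ℂ) := by
      rw [smul_eq_mul]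
      push_cast
      ring
    rw [hc, Complex.ofReal_re]
    field_simp
    linear_combination (∑ j, w (j, j)) * hssB
  have hFadj : ∀ v, F v (uvec dB) = (Real.sqrt dA)⁻¹ * ∑ j, v (j, j) := by
    intro v
    rw [hF]
    simp only
    have h1 : Phi dB (uvec dB) = (((Real.sqrt dB)⁻¹ : ℝ) : ℂ) • 1 := by
      rw [uvec, Phi_smul, Phi_diagv]
    rw [h1, Matrix.kronecker_smul, smul_mul_assoc, Matrix.trace_smul,
      trace_kron_one_right ψ hmargA, trace_Phi]
    have hc : (((Real.sqrt dB)⁻¹ : ℝ) : ℂ) • ((dA : ℂ)⁻¹ * ((∑ j, v (j, j) : ℝ) : ℂ)) =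
        (((Real.sqrt dB)⁻¹ * (dA : ℝ)⁻¹ * ∑ j, v (j, j) : ℝ) : ℂ) := by
      rw [smul_eq_mul]
      push_cast
      ring
    rw [hc, Complex.ofReal_re]
    field_simp
    linear_combination (∑ j, v (j, j)) * hssA
  have hLu : L (uvec dA) = uvec dB := by
    apply ext_inner_right (𝕜 := ℝ)
    intro w
    rw [hLinner, hFu, huin dB w]
  have hLadj : ∀ v, (inner ℝ (uvec dA) v : ℝ) = 0 → (inner ℝ (L v) (uvec dB) : ℝ) = 0 := by
    intro v hv
    rw [hLinner, hFadj]
    rw [huin dA v] at hv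
    exact hv
  obtain ⟨x, y, hx0, hy0, hsvd⟩ := svd_with_unit (finrank_E dA) (finrank_E dB) L
    (uvec dA) (uvec dB) (norm_uvec hA) (norm_uvec hB) hLu hLadj
  refine ⟨_, _, isStdONB_of_onb hA x hx0, isStdONB_of_onb hB y hy0, ?_⟩
  intro α β hab
  have h0 : F (x α) (y β) = 0 := by rw [← hLinner]; exact hsvd α β hab
  rw [← trace_kron_real ψ hpsd.1 (Phi_isHermitian ((Real.sqrt dA : ℝ) • x α))
    (Phi_isHermitian ((Real.sqrt dB : ℝ) • y β))]
  have hXY : ((Phi dA ((Real.sqrt dA : ℝ) • x α) ⊗ₖ Phi dB ((Real.sqrt dB : ℝ) • y β)) * ψ).trace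
      = (((Real.sqrt dA * Real.sqrt dB : ℝ)) : ℂ) *
        ((Phi dA (x α) ⊗ₖ Phi dB (y β)) * ψ).trace := by
    rw [Phi_smul, Phi_smul, Matrix.smul_kronecker, Matrix.kronecker_smul, smul_mul_assoc,
      smul_mul_assoc, Matrix.trace_smul, Matrix.trace_smul, smul_eq_mul, smul_eq_mul]
    push_cast
    ring
  rw [hXY]
  have hre : ((((Real.sqrt dA * Real.sqrt dB : ℝ)) : ℂ) *
      ((Phi dA (x α) ⊗ₖ Phi dB (y β)) * ψ).trace).re = F (x α) (y β) := by
    rw [hF]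
    simp only [Complex.mul_re, Complex.ofReal_re, Complex.ofReal_im, zero_mul, sub_zero]
  rw [hre, h0, Complex.ofReal_zero]
end Kron
end
end

section
/- Let P be a positive definite matrix and Q any matrix of the same dimension. Then the unique solution of the Lyapunov equation P X + X P = Q is given by L(P,Q) = ∫₀^∞ e^{-tP} Q e^{-tP} dt. -/
open Matrix MeasureTheory
open scoped ComplexOrder

noncomputable section

lemma integral_exp_neg_mul_Ioi_zero' {a : ℝ} (ha : 0 < a) :
    ∫ t in Set.Ioi (0:ℝ), Real.exp (-(a*t)) = a⁻¹ := by
  have hderiv : ∀ x ∈ Set.Ici (0:ℝ),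
      HasDerivAt (fun t => -a⁻¹ * Real.exp (-(a*t))) (Real.exp (-(a*x))) x := by
    intro x _
    have h1 : HasDerivAt (fun t : ℝ => -(a*t)) (-a) x := by
      simpa using ((hasDerivAt_id x).const_mul (-a))
    have h2 := (Real.hasDerivAt_exp (-(a*x))).comp x h1
    convert h2.const_mul (-a⁻¹) using 1
    have ha' : a ≠ 0 := ha.ne'
    · rfl
    · rfl
    · rfl
    · field_simp
  have hint : IntegrableOn (fun x => Real.exp (-(a*x))) (Set.Ioi 0) := by
    simpa [neg_mul] using exp_neg_integrableOn_Ioi 0 ha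
  have htend : Filter.Tendsto (fun t => -a⁻¹ * Real.exp (-(a*t)))
      Filter.atTop (nhds 0) := by
    have : Filter.Tendsto (fun t : ℝ => Real.exp (-(a*t))) Filter.atTop (nhds 0) := by
      apply Real.tendsto_exp_atBot.comp
      exact Filter.tendsto_neg_atBot_iff.mpr ((Filter.tendsto_id (α := ℝ)).const_mul_atTop ha)
    simpa using this.const_mul (-a⁻¹)
  have := integral_Ioi_of_hasDerivAt_of_tendsto' hderiv hint htend
  simpa using this

lemma mul3_apply {d : ℕ} (A B C : Matrix (Fin d) (Fin d) ℂ) (i j : Fin d) :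
    (A * B * C) i j = ∑ k, ∑ l, A i k * B k l * C l j := by
  simp only [Matrix.mul_apply, Finset.sum_mul]
  rw [Finset.sum_comm]

/-- For positive definite `P`, the unique solution of the Lyapunov equation `P X + X P = Q`
is `L(P,Q) = ∫₀^∞ e^{-tP} Q e^{-tP} dt` (entrywise Bochner integral). -/
theorem lyapunov_solution_integral (d : ℕ) (P Q : Matrix (Fin d) (Fin d) ℂ)
    (hP : P.PosDef)
    (X : Matrix (Fin d) (Fin d) ℂ)
    (hX : ∀ i j, X i j = ∫ t in Set.Ioi (0 : ℝ),
      (NormedSpace.exp (-(t • P)) * Q * NormedSpace.exp (-(t • P))) i j) :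
    P * X + X * P = Q ∧ ∀ Y : Matrix (Fin d) (Fin d) ℂ, P * Y + Y * P = Q → Y = X := by
  have hH : P.IsHermitian := hP.1
  set U : Matrix (Fin d) (Fin d) ℂ := ↑(hH.eigenvectorUnitary) with hUdef
  have hU1 : U * star U = 1 := (Matrix.mem_unitaryGroup_iff).mp hH.eigenvectorUnitary.2
  have hU2 : star U * U = 1 := (Matrix.mem_unitaryGroup_iff').mp hH.eigenvectorUnitary.2
  set ev : Fin d → ℝ := hH.eigenvalues with hevdef
  have hev : ∀ i, 0 < ev i := fun i => hP.eigenvalues_pos i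
  have hevs : ∀ k l, 0 < ev k + ev l := fun k l => add_pos (hev k) (hev l)
  have hspec : P = U * diagonal (fun i => (ev i : ℂ)) * star U := by
    exact hH.spectral_theorem
  set Uu : (Matrix (Fin d) (Fin d) ℂ)ˣ := ⟨U, star U, hU1, hU2⟩ with hUu
  have hexp : ∀ t : ℝ, NormedSpace.exp (-(t • P)) =
      U * diagonal (fun k => Complex.exp (-(t * ev k : ℂ))) * star U := by
    intro t
    have h1 : -(t • P) = (↑Uu : Matrix (Fin d) (Fin d) ℂ) *
        diagonal (fun k => (-(t * ev k : ℂ))) * (↑Uu⁻¹ : Matrix (Fin d) (Fin d) ℂ) := by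
      conv_lhs => rw [hspec]
      show _ = U * _ * star U
      rw [← smul_mul_assoc, ← mul_smul_comm, ← diagonal_smul, ← neg_mul, ← mul_neg,
        ← diagonal_neg]
      have h2 : (t • fun i => ((ev i : ℂ))) = fun k => ((t : ℂ) * ev k) := by
        funext k; simp [Complex.real_smul]
      rw [h2]
    rw [h1, Matrix.exp_units_conj, Matrix.exp_diagonal]
    congr 2
    funext k
    simp [Pi.exp_def, ← Complex.exp_eq_exp_ℂ]
  set Q' : Matrix (Fin d) (Fin d) ℂ := star U * Q * U with hQ'
  set M : Matrix (Fin d) (Fin d) ℂ :=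
    Matrix.of (fun k l => (((ev k + ev l)⁻¹ : ℝ) : ℂ) * Q' k l) with hM
  -- integrand entry formula
  have hfun : ∀ (t : ℝ) (i j : Fin d),
      (NormedSpace.exp (-(t • P)) * Q * NormedSpace.exp (-(t • P))) i j
        = ∑ k, ∑ l, (U i k * Q' k l * star U l j) *
            ((Real.exp (-((ev k + ev l) * t)) : ℝ) : ℂ) := by
    intro t i j
    rw [hexp t]
    have hassoc : U * diagonal (fun k => Complex.exp (-(t * ev k : ℂ))) * star U * Q *
        (U * diagonal (fun k => Complex.exp (-(t * ev k : ℂ))) * star U)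
        = U * (diagonal (fun k => Complex.exp (-(t * ev k : ℂ))) * Q' *
            diagonal (fun k => Complex.exp (-(t * ev k : ℂ)))) * star U := by
      simp only [hQ', Matrix.mul_assoc]
    rw [hassoc, mul3_apply]
    refine Finset.sum_congr rfl fun k _ => Finset.sum_congr rfl fun l _ => ?_
    simp only [Matrix.mul_diagonal, Matrix.diagonal_mul]
    have hee : Complex.exp (-(t * ev k : ℂ)) * Complex.exp (-(t * ev l : ℂ))
        = ((Real.exp (-((ev k + ev l) * t)) : ℝ) : ℂ) := by
      rw [← Complex.exp_add, Complex.ofReal_exp]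
      congr 1
      push_cast
      ring
    calc U i k * (Complex.exp (-(t * ev k : ℂ)) * Q' k l * Complex.exp (-(t * ev l : ℂ)))
          * star U l j
        = (U i k * Q' k l * star U l j) *
            (Complex.exp (-(t * ev k : ℂ)) * Complex.exp (-(t * ev l : ℂ))) := by ring
      _ = _ := by rw [hee]
  -- integrability of each term
  have hterm_int : ∀ (c : ℂ) (k l : Fin d),
      IntegrableOn (fun t : ℝ => c * ((Real.exp (-((ev k + ev l) * t)) : ℝ) : ℂ))
        (Set.Ioi 0) := by
    intro c k l
    have h0 : IntegrableOn (fun t : ℝ => Real.exp (-((ev k + ev l) * t))) (Set.Ioi 0) := by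
      rw [show (fun t : ℝ => Real.exp (-((ev k + ev l) * t)))
          = fun x => Real.exp (-(ev k + ev l) * x) by funext x; rw [neg_mul]]
      exact exp_neg_integrableOn_Ioi 0 (hevs k l)
    exact h0.ofReal.const_mul c
  -- value of each term
  have hterm_val : ∀ (c : ℂ) (k l : Fin d),
      ∫ t in Set.Ioi (0:ℝ), c * ((Real.exp (-((ev k + ev l) * t)) : ℝ) : ℂ)
        = c * (((ev k + ev l)⁻¹ : ℝ) : ℂ) := by
    intro c k l
    rw [MeasureTheory.integral_const_mul]
    congr 1
    rw [← integral_exp_neg_mul_Ioi_zero' (hevs k l)]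
    exact integral_ofReal
  -- X = U * M * star U
  have hXUM : X = U * M * star U := by
    ext i j
    rw [hX i j]
    calc (∫ t in Set.Ioi (0:ℝ),
          (NormedSpace.exp (-(t • P)) * Q * NormedSpace.exp (-(t • P))) i j)
        = ∫ t in Set.Ioi (0:ℝ), ∑ k, ∑ l, (U i k * Q' k l * star U l j) *
            ((Real.exp (-((ev k + ev l) * t)) : ℝ) : ℂ) := by
          exact integral_congr_ae (Filter.Eventually.of_forall fun t => hfun t i j)
      _ = ∑ k, ∑ l, ∫ t in Set.Ioi (0:ℝ), (U i k * Q' k l * star U l j) *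
            ((Real.exp (-((ev k + ev l) * t)) : ℝ) : ℂ) := by
          rw [MeasureTheory.integral_finset_sum _ (fun k _ =>
            integrable_finset_sum _ (fun l _ => hterm_int _ k l))]
          exact Finset.sum_congr rfl fun k _ =>
            MeasureTheory.integral_finset_sum _ (fun l _ => hterm_int _ k l)
      _ = ∑ k, ∑ l, (U i k * Q' k l * star U l j) * (((ev k + ev l)⁻¹ : ℝ) : ℂ) := by
          exact Finset.sum_congr rfl fun k _ => Finset.sum_congr rfl fun l _ =>
            hterm_val _ k l
      _ = (U * M * star U) i j := by
          rw [mul3_apply]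
          exact Finset.sum_congr rfl fun k _ => Finset.sum_congr rfl fun l _ => by
            simp only [hM, Matrix.of_apply]; ring
  -- the diagonal Lyapunov identity
  have hDM : diagonal (fun i => (ev i : ℂ)) * M + M * diagonal (fun i => (ev i : ℂ)) = Q' := by
    ext k l
    simp only [Matrix.add_apply, Matrix.diagonal_mul, Matrix.mul_diagonal, hM,
      Matrix.of_apply]
    have hne : (ev k + ev l : ℝ) ≠ 0 := ne_of_gt (hevs k l)
    have h0 : ((ev k : ℂ) + (ev l : ℂ)) ≠ 0 := by
      have := ne_of_gt (hevs k l)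
      exact_mod_cast (by exact_mod_cast this : ((ev k + ev l : ℝ) : ℂ) ≠ 0)
    have : ((ev k : ℂ) + (ev l : ℂ)) * (((ev k + ev l)⁻¹ : ℝ) : ℂ) = 1 := by
      rw [show (((ev k + ev l)⁻¹ : ℝ) : ℂ) = ((ev k : ℂ) + (ev l : ℂ))⁻¹ by push_cast; ring]
      exact mul_inv_cancel₀ h0
    calc (ev k : ℂ) * ((((ev k + ev l)⁻¹ : ℝ) : ℂ) * Q' k l)
          + (((ev k + ev l)⁻¹ : ℝ) : ℂ) * Q' k l * (ev l : ℂ)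
        = (((ev k : ℂ) + (ev l : ℂ)) * (((ev k + ev l)⁻¹ : ℝ) : ℂ)) * Q' k l := by ring
      _ = Q' k l := by rw [this, one_mul]
  constructor
  · rw [hXUM]
    calc P * (U * M * star U) + U * M * star U * P
        = U * (diagonal (fun i => (ev i : ℂ)) * M + M * diagonal (fun i => (ev i : ℂ)))
            * star U := by
          rw [hspec]
          simp only [Matrix.mul_assoc, Matrix.mul_add, Matrix.add_mul]
          rw [show star U * (U * (M * star U)) = M * star U by
            rw [← Matrix.mul_assoc, hU2, Matrix.one_mul]]
          rw [show star U * (U * (diagonal (fun i => (ev i : ℂ)) * star U))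
              = diagonal (fun i => (ev i : ℂ)) * star U by
            rw [← Matrix.mul_assoc, hU2, Matrix.one_mul]]
      _ = U * Q' * star U := by rw [hDM]
      _ = Q := by
          rw [hQ']
          calc U * (star U * Q * U) * star U = (U * star U) * Q * (U * star U) := by
                simp only [Matrix.mul_assoc]
            _ = Q := by rw [hU1, Matrix.one_mul, Matrix.mul_one]
  · intro Y hY
    have e1 : star U * (P * Y) * U = diagonal (fun i => (ev i : ℂ)) * (star U * Y * U) := by
      rw [hspec]
      simp only [Matrix.mul_assoc]
      rw [← Matrix.mul_assoc (star U) U, hU2, Matrix.one_mul]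
    have e2 : star U * (Y * P) * U = (star U * Y * U) * diagonal (fun i => (ev i : ℂ)) := by
      rw [hspec]
      simp only [Matrix.mul_assoc]
      rw [hU2, Matrix.mul_one]
    have hY' : diagonal (fun i => (ev i : ℂ)) * (star U * Y * U)
        + (star U * Y * U) * diagonal (fun i => (ev i : ℂ)) = Q' := by
      rw [← e1, ← e2, hQ', ← hY]
      simp only [Matrix.mul_add, Matrix.add_mul]
    have hYM : star U * Y * U = M := by
      ext k l
      have hkl := congrFun (congrFun hY' k) l
      simp only [Matrix.add_apply, Matrix.diagonal_mul, Matrix.mul_diagonal] at hkl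
      have hne : ((ev k : ℂ) + (ev l : ℂ)) ≠ 0 := by
        have : ((ev k + ev l : ℝ) : ℂ) ≠ 0 := by
          exact_mod_cast ne_of_gt (hevs k l)
        push_cast at this
        exact this
      simp only [hM, Matrix.of_apply]
      rw [← hkl]
      have : (ev k : ℂ) * (star U * Y * U) k l + (star U * Y * U) k l * (ev l : ℂ)
          = ((ev k : ℂ) + (ev l : ℂ)) * (star U * Y * U) k l := by ring
      rw [this]
      rw [show (((ev k + ev l)⁻¹ : ℝ) : ℂ) = ((ev k : ℂ) + (ev l : ℂ))⁻¹ by push_cast; ring]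
      field_simp
    calc Y = (U * star U) * Y * (U * star U) := by
          rw [hU1, Matrix.one_mul, Matrix.mul_one]
      _ = U * (star U * Y * U) * star U := by simp only [Matrix.mul_assoc]
      _ = X := by rw [hYM, hXUM]
end
end

section
/- Define ζ: ℝ → ℝ by ζ(x) = x² for x ≤ 0, ζ(x) = (x-1)² for x ≥ 1, and ζ(x) = 0 for 0 ≤ x ≤ 1. For M ∈ H_d Hermitian, applying ζ via functional calculus, Tr ζ(M) equals the squared Frobenius-distance from M to the convex set Δ = {X Hermitian : 0 ≤ X ≤ Id}, i.e., Tr ζ(M) = min_{X ∈ Δ} ‖M - X‖₂². -/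
open Matrix
open scoped ComplexOrder

noncomputable section

/-- `ζ(x) = x²` for `x ≤ 0`, `(x-1)²` for `x ≥ 1`, and `0` on `[0,1]`. -/
def zeta (x : ℝ) : ℝ :=
  if x ≤ 0 then x ^ 2 else if 1 ≤ x then (x - 1) ^ 2 else 0


lemma psd_diag_nonneg {n : Type*} [Fintype n] [DecidableEq n] {M : Matrix n n ℂ}
    (hM : M.PosSemidef) (i : n) : 0 ≤ M i i := by
  simpa [dotProduct, Pi.single_apply, Finset.sum_ite_eq'] using hM.dotProduct_mulVec_nonneg (Pi.single i 1)

lemma frob_re {n : Type*} [Fintype n] (A : Matrix n n ℂ) :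
    (Matrix.trace (Aᴴ * A)).re = ∑ i, ∑ j, Complex.normSq (A j i) := by
  simp only [Matrix.trace, Matrix.diag, Matrix.mul_apply, Matrix.conjTranspose_apply]
  rw [Complex.re_sum]
  refine Finset.sum_congr rfl fun i _ => ?_
  rw [Complex.re_sum]
  refine Finset.sum_congr rfl fun j _ => ?_
  rw [RCLike.star_def, ← Complex.normSq_eq_conj_mul_self, Complex.ofReal_re]

lemma zeta_le (x t : ℝ) (h0 : 0 ≤ t) (h1 : t ≤ 1) : zeta x ≤ (x - t) ^ 2 := by
  unfold zeta
  split_ifs with hx hx1 <;> nlinarith [sq_nonneg (x - t)]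

lemma zeta_eq_clamp (x : ℝ) : zeta x = (x - min 1 (max 0 x)) ^ 2 := by
  unfold zeta
  split_ifs with hx hx1
  · rw [max_eq_left hx, min_eq_right (by norm_num)]; ring
  · rw [max_eq_right (le_of_not_ge hx), min_eq_left hx1]
  · rw [max_eq_right (le_of_not_ge hx), min_eq_right (le_of_not_ge hx1)]; ring

lemma conj_conj {n : Type*} [Fintype n] [DecidableEq n] (U X : Matrix n n ℂ)
    (hU1 : U * Uᴴ = 1) : U * (Uᴴ * X * U) * Uᴴ = X := by
  calc U * (Uᴴ * X * U) * Uᴴ = (U * Uᴴ) * X * (U * Uᴴ) := by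
        simp only [Matrix.mul_assoc]
      _ = X := by rw [hU1, Matrix.one_mul, Matrix.mul_one]

lemma trace_conj_frob {n : Type*} [Fintype n] [DecidableEq n] (U P : Matrix n n ℂ)
    (hU2 : Uᴴ * U = 1) :
    Matrix.trace ((U * P * Uᴴ)ᴴ * (U * P * Uᴴ)) = Matrix.trace (Pᴴ * P) := by
  have h : (U * P * Uᴴ)ᴴ * (U * P * Uᴴ) = U * (Pᴴ * P) * Uᴴ := by
    rw [Matrix.conjTranspose_mul, Matrix.conjTranspose_mul, Matrix.conjTranspose_conjTranspose]
    calc U * (Pᴴ * Uᴴ) * (U * P * Uᴴ) = U * (Pᴴ * ((Uᴴ * U) * (P * Uᴴ))) := by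
          simp only [Matrix.mul_assoc]
      _ = U * (Pᴴ * P) * Uᴴ := by rw [hU2, Matrix.one_mul]; simp only [Matrix.mul_assoc]
  rw [h, Matrix.trace_mul_cycle, ← Matrix.mul_assoc, hU2, Matrix.one_mul]

/-- For Hermitian `M`, `Tr ζ(M)` (computed via the spectrum) is the minimum squared
Frobenius distance from `M` to the convex set `Δ = {X : 0 ≤ X ≤ Id}`. -/
theorem trace_zeta_eq_dist_sq (d : ℕ) (M : Matrix (Fin d) (Fin d) ℂ)
    (hM : M.IsHermitian) :
    IsLeast
      {r : ℝ | ∃ X : Matrix (Fin d) (Fin d) ℂ,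
        X.PosSemidef ∧ ((1 : Matrix (Fin d) (Fin d) ℂ) - X).PosSemidef ∧
        r = (Matrix.trace ((M - X)ᴴ * (M - X))).re}
      (∑ i, zeta (hM.eigenvalues i)) := by
  set U : Matrix (Fin d) (Fin d) ℂ := (hM.eigenvectorUnitary : Matrix (Fin d) (Fin d) ℂ) with hU
  have hU1 : U * Uᴴ = 1 := by
    rw [← Matrix.star_eq_conjTranspose]
    exact Matrix.mem_unitaryGroup_iff.mp hM.eigenvectorUnitary.2
  have hU2 : Uᴴ * U = 1 := by
    rw [← Matrix.star_eq_conjTranspose]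
    exact Matrix.mem_unitaryGroup_iff'.mp hM.eigenvectorUnitary.2
  have hspec : M = U * Matrix.diagonal (RCLike.ofReal ∘ hM.eigenvalues) * Uᴴ := by
    rw [← Matrix.star_eq_conjTranspose]; exact hM.spectral_theorem
  constructor
  · -- membership: clamp eigenvalues
    set c : Fin d → ℝ := fun i => min 1 (max 0 (hM.eigenvalues i)) with hc
    have hc0 : ∀ i, 0 ≤ c i := fun i => le_min zero_le_one (le_max_left _ _)
    have hc1 : ∀ i, c i ≤ 1 := fun i => min_le_left _ _
    refine ⟨U * Matrix.diagonal (fun i => (c i : ℂ)) * Uᴴ, ?_, ?_, ?_⟩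
    · exact (Matrix.PosSemidef.diagonal fun i =>
        show (0 : ℂ) ≤ _ from Complex.zero_le_real.mpr (hc0 i)).mul_mul_conjTranspose_same U
    · have h1 : (1 : Matrix (Fin d) (Fin d) ℂ) - U * Matrix.diagonal (fun i => (c i : ℂ)) * Uᴴ
          = U * Matrix.diagonal (fun i => ((1 - c i : ℝ) : ℂ)) * Uᴴ := by
        have : Matrix.diagonal (fun i => ((1 - c i : ℝ) : ℂ))
            = (1 : Matrix (Fin d) (Fin d) ℂ) - Matrix.diagonal (fun i => (c i : ℂ)) := by
          rw [← Matrix.diagonal_one, Matrix.diagonal_sub]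
          funext i; push_cast; ring
        rw [this, Matrix.mul_sub, Matrix.mul_one, Matrix.sub_mul, hU1]
      rw [h1]
      exact (Matrix.PosSemidef.diagonal fun i =>
        show (0 : ℂ) ≤ _ from Complex.zero_le_real.mpr (by
          have := hc1 i; linarith)).mul_mul_conjTranspose_same U
    · have hMX : M - U * Matrix.diagonal (fun i => (c i : ℂ)) * Uᴴ
          = U * Matrix.diagonal (fun i => ((hM.eigenvalues i - c i : ℝ) : ℂ)) * Uᴴ := by
        conv_lhs => rw [hspec]
        rw [← Matrix.sub_mul, ← Matrix.mul_sub, Matrix.diagonal_sub]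
        congr 2; funext i; push_cast; simp [Function.comp]
      rw [hMX, trace_conj_frob _ _ hU2, Matrix.diagonal_conjTranspose,
        Matrix.diagonal_mul_diagonal, Matrix.trace_diagonal]
      rw [Complex.re_sum]
      refine Finset.sum_congr rfl fun i _ => ?_
      rw [zeta_eq_clamp]
      simp [← Complex.ofReal_mul, Pi.star_apply, ← Complex.ofReal_pow, sq, hc]
  · -- lower bound
    rintro r ⟨X, hX, h1X, rfl⟩
    set Y : Matrix (Fin d) (Fin d) ℂ := Uᴴ * X * U with hY
    have hYpsd : Y.PosSemidef := hX.conjTranspose_mul_mul_same U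
    have hY1 : ((1 : Matrix (Fin d) (Fin d) ℂ) - Y).PosSemidef := by
      have h : (1 : Matrix (Fin d) (Fin d) ℂ) - Y
          = Uᴴ * ((1 : Matrix (Fin d) (Fin d) ℂ) - X) * U := by
        rw [Matrix.mul_sub, Matrix.mul_one, Matrix.sub_mul, hU2]
      rw [h]; exact h1X.conjTranspose_mul_mul_same U
    set P : Matrix (Fin d) (Fin d) ℂ :=
      Matrix.diagonal (RCLike.ofReal ∘ hM.eigenvalues) - Y with hP
    have hMX : M - X = U * P * Uᴴ := by
      rw [hP, Matrix.mul_sub, Matrix.sub_mul, ← hspec, hY, conj_conj U X hU1]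
    rw [hMX, trace_conj_frob _ _ hU2, frob_re]
    refine Finset.sum_le_sum fun i _ => ?_
    have h1 : Complex.normSq (P i i) ≤ ∑ j, Complex.normSq (P j i) :=
      Finset.single_le_sum (f := fun j => Complex.normSq (P j i))
        (fun j _ => Complex.normSq_nonneg _) (Finset.mem_univ i)
    refine le_trans ?_ h1
    have hPii : P i i = ((hM.eigenvalues i : ℝ) : ℂ) - Y i i := by
      simp [hP, Matrix.sub_apply, Matrix.diagonal_apply_eq, Function.comp]
    have hy0 : 0 ≤ Y i i := psd_diag_nonneg hYpsd i
    have hy1' : 0 ≤ ((1 : Matrix (Fin d) (Fin d) ℂ) - Y) i i := psd_diag_nonneg hY1 i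
    rw [Complex.le_def] at hy0 hy1'
    simp only [Matrix.sub_apply, Matrix.one_apply_eq, Complex.zero_re, Complex.zero_im,
      Complex.sub_re, Complex.sub_im, Complex.one_re, Complex.one_im] at hy0 hy1'
    have him : (Y i i).im = 0 := hy0.2.symm
    have hre0 : 0 ≤ (Y i i).re := hy0.1
    have hre1 : (Y i i).re ≤ 1 := by linarith [hy1'.1]
    have : Complex.normSq (P i i) = (hM.eigenvalues i - (Y i i).re) ^ 2 := by
      rw [hPii, Complex.normSq_apply]
      simp [Complex.sub_re, Complex.sub_im, him]
      ring
    rw [this]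
    exact zeta_le _ _ hre0 hre1
end
end

section
/- For Hermitian matrices P and Q with P, P+Q acting via a continuously differentiable spectral functional calculus of ζ, it holds that |Tr(ζ(P+Q) - ζ(P))| ≤ 4(‖P‖₂‖Q‖₂ + ‖Q‖₂²), where ‖·‖₂ is the Frobenius norm and ζ(x) = x² for x ≤ 0, (x-1)² for x ≥ 1, and 0 otherwise. -/
open Matrix

noncomputable section

/-- Frobenius norm `‖M‖₂ = (Tr M†M)^{1/2}`. -/
def fnorm {d : ℕ} (M : Matrix (Fin d) (Fin d) ℂ) : ℝ :=
  Real.sqrt ((Matrix.trace (Mᴴ * M)).re)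

open Finset in
lemma zeta_eq (x : ℝ) : zeta x = (min x 0)^2 + (max (x-1) 0)^2 := by
  unfold zeta
  rcases le_or_gt x 0 with h|h <;> rcases le_or_gt 1 x with h1|h1 <;>
    simp [min_def, max_def] <;> split_ifs <;> first | rfl | linarith | nlinarith

lemma min_lip (a b : ℝ) : |min a 0 - min b 0| ≤ |a - b| := by
  rw [abs_sub_le_iff]
  have h1 := le_abs_self (a - b); have h2 := neg_abs_le (a - b)
  constructor <;> rcases le_total a 0 with h|h <;> rcases le_total b 0 with h'|h' <;>
    simp [min_def, *] <;> linarith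

lemma max_lip (a b : ℝ) : |max (a-1) 0 - max (b-1) 0| ≤ |a - b| := by
  rw [abs_sub_le_iff]
  have h1 := le_abs_self (a - b); have h2 := neg_abs_le (a - b)
  constructor <;> rcases le_total (a-1) 0 with h|h <;> rcases le_total (b-1) 0 with h'|h' <;>
    simp [max_def, *] <;> linarith

lemma min_abs_le (b : ℝ) : |min b 0| ≤ |b| := by
  rcases le_total b 0 with h|h <;> simp [min_def, *]

lemma max_abs_le (b : ℝ) : |max (b-1) 0| ≤ |b| := by
  rcases le_total (b-1) 0 with h|h
  · rw [max_eq_right h, abs_zero]; exact abs_nonneg b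
  · rw [max_eq_left h, abs_of_nonneg h, abs_of_nonneg (by linarith)]; linarith

lemma zeta_diff_bound (a b : ℝ) : |zeta a - zeta b| ≤ 4 * |b| * |a - b| + 2 * (a - b) ^ 2 := by
  have h1 := min_lip a b
  have h2 := max_lip a b
  have h3 := min_abs_le b
  have h4 := max_abs_le b
  have h5 : |min a 0| ≤ |b| + |a - b| := by
    calc |min a 0| = |min b 0 + (min a 0 - min b 0)| := by ring_nf
      _ ≤ |min b 0| + |min a 0 - min b 0| := abs_add_le _ _
      _ ≤ |b| + |a - b| := add_le_add h3 h1
  have h6 : |max (a-1) 0| ≤ |b| + |a - b| := by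
    calc |max (a-1) 0| = |max (b-1) 0 + (max (a-1) 0 - max (b-1) 0)| := by ring_nf
      _ ≤ |max (b-1) 0| + |max (a-1) 0 - max (b-1) 0| := abs_add_le _ _
      _ ≤ |b| + |a - b| := add_le_add h4 h2
  have key : zeta a - zeta b =
      (min a 0 - min b 0)*(min a 0 + min b 0) + (max (a-1) 0 - max (b-1) 0)*(max (a-1) 0 + max (b-1) 0) := by
    rw [zeta_eq, zeta_eq]; ring
  rw [key]
  have t1 : |(min a 0 - min b 0)*(min a 0 + min b 0)| ≤ |a - b| * (2 * |b| + |a - b|) := by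
    rw [abs_mul]
    apply mul_le_mul h1 ((abs_add_le _ _).trans (by linarith)) (abs_nonneg _) (abs_nonneg _)
  have t2 : |(max (a-1) 0 - max (b-1) 0)*(max (a-1) 0 + max (b-1) 0)| ≤ |a - b| * (2 * |b| + |a - b|) := by
    rw [abs_mul]
    apply mul_le_mul h2 ((abs_add_le _ _).trans (by linarith)) (abs_nonneg _) (abs_nonneg _)
  calc |_ + _| ≤ _ + _ := abs_add_le _ _
    _ ≤ |a - b| * (2 * |b| + |a - b|) + |a - b| * (2 * |b| + |a - b|) := add_le_add t1 t2
    _ = 4 * |b| * |a - b| + 2 * |a - b| ^ 2 := by ring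
    _ = 4 * |b| * |a - b| + 2 * (a - b) ^ 2 := by rw [sq_abs]

def frobSq {d : ℕ} (M : Matrix (Fin d) (Fin d) ℂ) : ℝ := ∑ i, ∑ j, Complex.normSq (M i j)

lemma frobSq_nonneg {d : ℕ} (M : Matrix (Fin d) (Fin d) ℂ) : 0 ≤ frobSq M := by
  apply Finset.sum_nonneg; intro i _; apply Finset.sum_nonneg; intro j _
  exact Complex.normSq_nonneg _

lemma trace_conjTranspose_mul_re {d : ℕ} (M : Matrix (Fin d) (Fin d) ℂ) :
    (Matrix.trace (Mᴴ * M)).re = frobSq M := by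
  rw [Matrix.trace]
  simp only [Matrix.diag_apply, Matrix.mul_apply, Matrix.conjTranspose_apply]
  rw [Complex.re_sum]
  rw [frobSq, Finset.sum_comm]
  congr 1; ext i
  rw [Complex.re_sum]
  congr 1; ext j
  simp [Complex.star_def, Complex.mul_conj', Complex.normSq_apply]

lemma trace_sq_re {d : ℕ} {A : Matrix (Fin d) (Fin d) ℂ} (hA : A.IsHermitian) :
    (Matrix.trace (A * A)).re = ∑ i, hA.eigenvalues i ^ 2 := by
  set U : Matrix (Fin d) (Fin d) ℂ := (hA.eigenvectorUnitary : Matrix (Fin d) (Fin d) ℂ) with hUdef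
  set D : Matrix (Fin d) (Fin d) ℂ := Matrix.diagonal (RCLike.ofReal ∘ hA.eigenvalues) with hDdef
  have hU : star U * U = 1 := Matrix.mem_unitaryGroup_iff'.mp (hA.eigenvectorUnitary).2
  have hA' : A = U * D * star U := hA.spectral_theorem
  have key : A * A = U * (D * D) * star U := by
    rw [hA']
    calc U * D * star U * (U * D * star U) = U * (D * ((star U * U) * (D * star U))) := by
          simp only [Matrix.mul_assoc]
      _ = U * (D * D) * star U := by rw [hU, Matrix.one_mul]; simp only [Matrix.mul_assoc]
  rw [key, Matrix.trace_mul_comm, ← Matrix.mul_assoc, hU, Matrix.one_mul]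
  rw [hDdef, Matrix.diagonal_mul_diagonal, Matrix.trace_diagonal]
  rw [Complex.re_sum]
  congr 1; ext i
  simp [← Complex.ofReal_mul, sq]

lemma unitary_normSq_doublyStochastic {d : ℕ} {W : Matrix (Fin d) (Fin d) ℂ}
    (hW : W ∈ Matrix.unitaryGroup (Fin d) ℂ) :
    (fun i j => Complex.normSq (W i j)) ∈ doublyStochastic ℝ (Fin d) := by
  refine mem_doublyStochastic_iff_sum.mpr ?_
  refine ⟨fun i j => Complex.normSq_nonneg _, fun i => ?_, fun j => ?_⟩
  · have h1 : (W * star W) i i = 1 := by rw [Matrix.mem_unitaryGroup_iff.mp hW]; simp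
    have : ((W * star W) i i).re = 1 := by rw [h1]; simp
    rw [Matrix.mul_apply] at this
    rw [← this, Complex.re_sum]
    congr 1; ext j
    simp [Matrix.star_eq_conjTranspose, Matrix.conjTranspose_apply, Complex.mul_conj]
  · have h1 : (star W * W) j j = 1 := by rw [Matrix.mem_unitaryGroup_iff'.mp hW]; simp
    have : ((star W * W) j j).re = 1 := by rw [h1]; simp
    rw [Matrix.mul_apply] at this
    rw [← this, Complex.re_sum]
    congr 1; ext i
    simp [Matrix.star_eq_conjTranspose, Matrix.conjTranspose_apply, Complex.star_def,
      Complex.mul_conj', Complex.normSq_apply]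

lemma ofReal_comp : (RCLike.ofReal : ℝ → ℂ) = Complex.ofReal := rfl

lemma trace_diag_mul (d : ℕ) (lam mu : Fin d → ℝ) (W : Matrix (Fin d) (Fin d) ℂ) :
    (Matrix.trace (Matrix.diagonal (RCLike.ofReal ∘ lam) * W *
      Matrix.diagonal (RCLike.ofReal ∘ mu) * star W)).re =
    ∑ i, ∑ j, Complex.normSq (W i j) * (lam i * mu j) := by
  have hD : Matrix.diagonal (RCLike.ofReal ∘ lam) * W * Matrix.diagonal (RCLike.ofReal ∘ mu)
      = Matrix.of (fun i j => (lam i : ℂ) * W i j * (mu j : ℂ)) := by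
    ext i j
    rw [Matrix.mul_diagonal, Matrix.diagonal_mul]
    simp [ofReal_comp]
  rw [hD, Matrix.trace]
  simp only [Matrix.diag_apply, Matrix.mul_apply, Matrix.star_eq_conjTranspose,
    Matrix.conjTranspose_apply, Matrix.of_apply]
  rw [Complex.re_sum]
  congr 1; ext i
  rw [Complex.re_sum]
  congr 1; ext j
  have : (lam i : ℂ) * W i j * (mu j : ℂ) * star (W i j)
      = (W i j * star (W i j)) * ((lam i : ℂ) * (mu j : ℂ)) := by ring
  rw [this]
  simp [Complex.star_def, Complex.mul_conj]

lemma trace_mul_eigen_re {d : ℕ} {A B : Matrix (Fin d) (Fin d) ℂ}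
    (hA : A.IsHermitian) (hB : B.IsHermitian) :
    ∃ S ∈ doublyStochastic ℝ (Fin d),
      (Matrix.trace (A * B)).re = ∑ i, ∑ j, S i j * (hA.eigenvalues i * hB.eigenvalues j) := by
  set U : Matrix (Fin d) (Fin d) ℂ := (hA.eigenvectorUnitary : Matrix (Fin d) (Fin d) ℂ)
  set V : Matrix (Fin d) (Fin d) ℂ := (hB.eigenvectorUnitary : Matrix (Fin d) (Fin d) ℂ)
  set DA : Matrix (Fin d) (Fin d) ℂ := Matrix.diagonal (RCLike.ofReal ∘ hA.eigenvalues)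
  set DB : Matrix (Fin d) (Fin d) ℂ := Matrix.diagonal (RCLike.ofReal ∘ hB.eigenvalues)
  have hUm := (hA.eigenvectorUnitary).2
  have hVm := (hB.eigenvectorUnitary).2
  have hWm : star U * V ∈ Matrix.unitaryGroup (Fin d) ℂ :=
    mul_mem (Unitary.star_mem hUm) hVm
  refine ⟨fun i j => Complex.normSq ((star U * V) i j), unitary_normSq_doublyStochastic hWm, ?_⟩
  have key : Matrix.trace (A * B) = Matrix.trace (DA * (star U * V) * DB * star (star U * V)) := by
    rw [show A = U * DA * star U from hA.spectral_theorem, show B = V * DB * star V from hB.spectral_theorem]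
    rw [show (U * DA * star U) * (V * DB * star V) = U * (DA * (star U * V) * DB * star V) by
      simp only [Matrix.mul_assoc]]
    rw [Matrix.trace_mul_comm, Matrix.star_mul, star_star]
    simp only [Matrix.mul_assoc]
  rw [key, trace_diag_mul]

lemma exists_le_weighted {ι : Type*} [Fintype ι] (w c : ι → ℝ) (hw0 : ∀ i, 0 ≤ w i)
    (hw1 : ∑ i, w i = 1) (v : ℝ) (hv : v = ∑ i, w i * c i) : ∃ i, v ≤ c i := by
  by_contra h
  push_neg at h
  obtain ⟨i0, hi0⟩ : ∃ i, 0 < w i := by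
    by_contra h'
    push_neg at h'
    have : ∑ i, w i ≤ 0 := Finset.sum_nonpos (fun i _ => h' i)
    linarith
  have hlt : ∑ i, w i * c i < ∑ i, w i * v := by
    apply Finset.sum_lt_sum
    · intro i _
      exact mul_le_mul_of_nonneg_left (h i).le (hw0 i)
    · exact ⟨i0, Finset.mem_univ _, mul_lt_mul_of_pos_left (h i0) hi0⟩
  rw [← Finset.sum_mul, hw1, one_mul] at hlt
  rw [← hv] at hlt
  linarith

lemma exists_perm_trace_le {d : ℕ} {A B : Matrix (Fin d) (Fin d) ℂ}
    (hA : A.IsHermitian) (hB : B.IsHermitian) :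
    ∃ σ : Equiv.Perm (Fin d),
      (Matrix.trace (A * B)).re ≤ ∑ i, hA.eigenvalues i * hB.eigenvalues (σ i) := by
  obtain ⟨S, hS, htr⟩ := trace_mul_eigen_re hA hB
  obtain ⟨w, hw0, hw1, hwS⟩ := exists_eq_sum_perm_of_mem_doublyStochastic hS
  apply exists_le_weighted w _ hw0 hw1
  rw [htr, ← hwS]
  simp only [Matrix.sum_apply, Matrix.smul_apply, PEquiv.toMatrix_apply, Equiv.toPEquiv_apply,
    Option.mem_def, Option.some.injEq, smul_eq_mul, Finset.sum_mul, mul_ite, mul_one, mul_zero]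
  have hstep : ∀ i : Fin d, (∑ j, ∑ σ : Equiv.Perm (Fin d),
      (if σ i = j then w σ else 0) * (hA.eigenvalues i * hB.eigenvalues j))
      = ∑ σ : Equiv.Perm (Fin d), w σ * (hA.eigenvalues i * hB.eigenvalues (σ i)) := by
    intro i
    rw [Finset.sum_comm]
    refine Finset.sum_congr rfl fun σ _ => ?_
    rw [Finset.sum_eq_single (σ i)]
    · simp
    · intro j _ hj
      simp [Ne.symm hj]
    · intro hc
      exact absurd (Finset.mem_univ _) hc
  rw [Finset.sum_congr rfl (fun i _ => hstep i), Finset.sum_comm]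
  refine Finset.sum_congr rfl fun σ _ => ?_
  rw [Finset.mul_sum]

lemma fnorm_eq_sqrt_frobSq {d : ℕ} (M : Matrix (Fin d) (Fin d) ℂ) :
    fnorm M = Real.sqrt (frobSq M) := by
  rw [fnorm, trace_conjTranspose_mul_re]

lemma hoffman_wielandt {d : ℕ} {A B : Matrix (Fin d) (Fin d) ℂ}
    (hA : A.IsHermitian) (hB : B.IsHermitian) :
    ∃ σ : Equiv.Perm (Fin d),
      ∑ i, (hA.eigenvalues i - hB.eigenvalues (σ i)) ^ 2 ≤ frobSq (A - B) := by
  obtain ⟨σ, hσ⟩ := exists_perm_trace_le hA hB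
  refine ⟨σ, ?_⟩
  have hAB : (A - B).IsHermitian := hA.sub hB
  have hfr : frobSq (A - B) = (Matrix.trace ((A - B) * (A - B))).re := by
    rw [← trace_conjTranspose_mul_re (A - B), hAB.eq]
  have hsplit : Matrix.trace ((A - B) * (A - B)) =
      Matrix.trace (A * A) - Matrix.trace (A * B) - Matrix.trace (B * A) +
        Matrix.trace (B * B) := by
    rw [Matrix.sub_mul, Matrix.mul_sub, Matrix.mul_sub, Matrix.trace_sub, Matrix.trace_sub,
      Matrix.trace_sub]
    ring
  have hBA : Matrix.trace (B * A) = Matrix.trace (A * B) := Matrix.trace_mul_comm B A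
  have hre : frobSq (A - B) =
      (Matrix.trace (A * A)).re + (Matrix.trace (B * B)).re - 2 * (Matrix.trace (A * B)).re := by
    rw [hfr, hsplit, hBA]
    simp [Complex.sub_re, Complex.add_re]
    ring
  have e1 := trace_sq_re hA
  have e2 := trace_sq_re hB
  have e3 : ∑ i, hB.eigenvalues (σ i) ^ 2 = ∑ i, hB.eigenvalues i ^ 2 :=
    Equiv.sum_comp σ (fun i => hB.eigenvalues i ^ 2)
  have expand : ∑ i, (hA.eigenvalues i - hB.eigenvalues (σ i)) ^ 2 =
      (∑ i, hA.eigenvalues i ^ 2) + (∑ i, hB.eigenvalues (σ i) ^ 2) -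
        2 * ∑ i, hA.eigenvalues i * hB.eigenvalues (σ i) := by
    rw [← Finset.sum_add_distrib, Finset.mul_sum, ← Finset.sum_sub_distrib]
    refine Finset.sum_congr rfl fun i _ => ?_
    ring
  rw [expand, hre, ← e1, e3, ← e2]
  linarith

/-- `|Tr(ζ(P+Q) - ζ(P))| ≤ 4(‖P‖₂‖Q‖₂ + ‖Q‖₂²)` for Hermitian `P, Q`, where `Tr ζ(M)`
is computed via the eigenvalues of `M`. -/
theorem trace_zeta_additivity (d : ℕ) (P Q : Matrix (Fin d) (Fin d) ℂ)
    (hP : P.IsHermitian) (hQ : Q.IsHermitian) :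
    |(∑ i, zeta ((hP.add hQ).eigenvalues i)) - ∑ i, zeta (hP.eigenvalues i)| ≤
      4 * (fnorm P * fnorm Q + fnorm Q ^ 2) := by
  obtain ⟨σ, hσ⟩ := hoffman_wielandt (hP.add hQ) hP
  rw [add_sub_cancel_left] at hσ
  set lam := (hP.add hQ).eigenvalues with hlam
  set mu := hP.eigenvalues with hmu
  have hfnQ : fnorm Q = Real.sqrt (frobSq Q) := fnorm_eq_sqrt_frobSq Q
  have hfnP : fnorm P = Real.sqrt (frobSq P) := fnorm_eq_sqrt_frobSq P
  have hfnQ0 : 0 ≤ fnorm Q := hfnQ ▸ Real.sqrt_nonneg _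
  have hfnP0 : 0 ≤ fnorm P := hfnP ▸ Real.sqrt_nonneg _
  have hfnQsq : fnorm Q ^ 2 = frobSq Q := by
    rw [hfnQ, Real.sq_sqrt (frobSq_nonneg Q)]
  have hfnPsq : fnorm P ^ 2 = frobSq P := by
    rw [hfnP, Real.sq_sqrt (frobSq_nonneg P)]
  have hfnPsq2 : frobSq P = ∑ i, mu i ^ 2 := by
    rw [← trace_conjTranspose_mul_re P, hP.eq, trace_sq_re hP]
  have hmuP : ∑ i, mu (σ i) ^ 2 = fnorm P ^ 2 := by
    rw [Equiv.sum_comp σ (fun i => mu i ^ 2), hfnPsq, hfnPsq2]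
  have hδ : ∑ i, (lam i - mu (σ i)) ^ 2 ≤ fnorm Q ^ 2 := by rw [hfnQsq]; exact hσ
  have hre : ∑ i, zeta (mu i) = ∑ i, zeta (mu (σ i)) :=
    (Equiv.sum_comp σ (fun i => zeta (mu i))).symm
  rw [hre, ← Finset.sum_sub_distrib]
  -- Cauchy-Schwarz part
  have cs := Finset.sum_mul_sq_le_sq_mul_sq Finset.univ (fun i => |mu (σ i)|)
    (fun i => |lam i - mu (σ i)|)
  have habs1 : ∑ i, |mu (σ i)| ^ 2 = fnorm P ^ 2 := by
    simp only [sq_abs]; exact hmuP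
  have habs2 : ∑ i, |lam i - mu (σ i)| ^ 2 ≤ fnorm Q ^ 2 := by
    simp only [sq_abs]; exact hδ
  have hcs2 : (∑ i, |mu (σ i)| * |lam i - mu (σ i)|) ^ 2 ≤ (fnorm P * fnorm Q) ^ 2 := by
    calc (∑ i, |mu (σ i)| * |lam i - mu (σ i)|) ^ 2
        ≤ (∑ i, |mu (σ i)| ^ 2) * (∑ i, |lam i - mu (σ i)| ^ 2) := cs
      _ ≤ fnorm P ^ 2 * fnorm Q ^ 2 := by
          rw [habs1]
          exact mul_le_mul_of_nonneg_left habs2 (by positivity)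
      _ = (fnorm P * fnorm Q) ^ 2 := by ring
  have hcs : ∑ i, |mu (σ i)| * |lam i - mu (σ i)| ≤ fnorm P * fnorm Q := by
    have h0 : 0 ≤ ∑ i, |mu (σ i)| * |lam i - mu (σ i)| :=
      Finset.sum_nonneg fun i _ => mul_nonneg (abs_nonneg _) (abs_nonneg _)
    nlinarith [mul_nonneg hfnP0 hfnQ0]
  calc |∑ i, (zeta (lam i) - zeta (mu (σ i)))|
      ≤ ∑ i, |zeta (lam i) - zeta (mu (σ i))| := Finset.abs_sum_le_sum_abs _ _
    _ ≤ ∑ i, (4 * |mu (σ i)| * |lam i - mu (σ i)| + 2 * (lam i - mu (σ i)) ^ 2) :=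
        Finset.sum_le_sum fun i _ => zeta_diff_bound (lam i) (mu (σ i))
    _ = 4 * (∑ i, |mu (σ i)| * |lam i - mu (σ i)|) + 2 * ∑ i, (lam i - mu (σ i)) ^ 2 := by
        simp only [mul_assoc]
        rw [Finset.sum_add_distrib, ← Finset.mul_sum, ← Finset.mul_sum]
    _ ≤ 4 * (fnorm P * fnorm Q) + 2 * fnorm Q ^ 2 := by
        have := mul_le_mul_of_nonneg_left hcs (by norm_num : (0:ℝ) ≤ 4)
        have := mul_le_mul_of_nonneg_left hδ (by norm_num : (0:ℝ) ≤ 2)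
        linarith
    _ ≤ 4 * (fnorm P * fnorm Q + fnorm Q ^ 2) := by nlinarith [sq_nonneg (fnorm Q)]
end
end

section
/- Let ψ_{AB} be a bipartite state with maximally mixed marginals and let T: M(B) → M(A) be its Markov super-operator. For any Q ∈ M(B^n) and any subset S ⊆ [n], the n-fold Markov super-operator commutes with the Efron–Stein projection: T^{⊗n}(Q[S]) = (T^{⊗n}Q)[S], and ‖T^{⊗n}(Q[S])‖₂ ≤ ρ^{|S|}‖Q[S]‖₂ where ρ = ρ(ψ_{AB}) is the maximal correlation. -/
open Matrix Kronecker
open scoped ComplexOrder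

noncomputable section

/-- The tensor basis element `B_σ = B_{σ₁} ⊗ ⋯ ⊗ B_{σₙ}` of `M_d^{⊗n}`. -/
def tensorFam {d n : ℕ} (B : Fin (d ^ 2) → Matrix (Fin d) (Fin d) ℂ)
    (σ : Fin n → Fin (d ^ 2)) : Matrix (Fin n → Fin d) (Fin n → Fin d) ℂ :=
  Matrix.of fun x y => ∏ i, B (σ i) (x i) (y i)

/-- The Efron–Stein component `Q[S] = ∑_{σ : supp σ = S} Q̂(σ) B_σ`, with Fourier
coefficients `Q̂(σ) = d^{-n} Tr(B_σ† Q)` w.r.t. a standard orthonormal basis. -/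
def esProj {d n : ℕ} (B : Fin (d ^ 2) → Matrix (Fin d) (Fin d) ℂ)
    (Q : Matrix (Fin n → Fin d) (Fin n → Fin d) ℂ) (S : Finset (Fin n)) :
    Matrix (Fin n → Fin d) (Fin n → Fin d) ℂ :=
  ∑ σ ∈ Finset.univ.filter
      (fun σ : Fin n → Fin (d ^ 2) => (Finset.univ.filter fun i => (σ i : ℕ) ≠ 0) = S),
    (Matrix.trace ((tensorFam B σ)ᴴ * Q) / ((d : ℂ) ^ n)) • tensorFam B σ

/-- The maximal correlation of a bipartite state with maximally mixed marginals. -/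
def maxCorr {α β : Type*} [Fintype α] [Fintype β] [DecidableEq α] [DecidableEq β]
    (ψ : Matrix (α × β) (α × β) ℂ) : ℝ :=
  sSup {r : ℝ | ∃ (P : Matrix α α ℂ) (Q : Matrix β β ℂ),
    Matrix.trace P = 0 ∧ Matrix.trace Q = 0 ∧
    Matrix.trace (Pᴴ * P) = (Fintype.card α : ℂ) ∧
    Matrix.trace (Qᴴ * Q) = (Fintype.card β : ℂ) ∧
    r = ‖Matrix.trace ((Pᴴ ⊗ₖ Q) * ψ)‖}

namespace MES

open Finset

variable {d n : ℕ}

lemma trace_conjT_mul {m : Type*} [Fintype m] (A C : Matrix m m ℂ) :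
    Matrix.trace (Aᴴ * C) = ∑ x : m, ∑ y : m, star (A y x) * C y x := by
  simp [Matrix.trace, Matrix.mul_apply, Matrix.diag, Matrix.conjTranspose_apply]

lemma trace_conjT_mul_self {m : Type*} [Fintype m] (A : Matrix m m ℂ) :
    Matrix.trace (Aᴴ * A) = ((∑ x : m, ∑ y : m, Complex.normSq (A y x) : ℝ) : ℂ) := by
  rw [trace_conjT_mul]
  push_cast
  refine Finset.sum_congr rfl fun x _ => Finset.sum_congr rfl fun y _ => ?_
  rw [Complex.normSq_eq_conj_mul_self]
  rfl

lemma trace_orth (hd : 0 < d) {B : Fin (d ^ 2) → Matrix (Fin d) (Fin d) ℂ}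
    (hB : IsStdONB d B) (i j : Fin (d ^ 2)) :
    Matrix.trace ((B i)ᴴ * B j) = if i = j then (d : ℂ) else 0 := by
  have h := hB.2.2.1 i j
  rw [innerN, div_eq_iff (by exact_mod_cast hd.ne' : (d:ℂ) ≠ 0)] at h
  rw [h]
  split <;> simp

lemma expand (hd : 0 < d) {B : Fin (d ^ 2) → Matrix (Fin d) (Fin d) ℂ}
    (hB : IsStdONB d B) (P : Matrix (Fin d) (Fin d) ℂ) :
    P = ∑ j, (Matrix.trace ((B j)ᴴ * P) / (d : ℂ)) • B j := by
  have hd' : (d : ℂ) ≠ 0 := by exact_mod_cast hd.ne'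
  have hmem : P ∈ Submodule.span ℂ (Set.range B) := by rw [hB.2.2.2]; trivial
  obtain ⟨c, hc⟩ := (Submodule.mem_span_range_iff_exists_fun ℂ).1 hmem
  have hcoef : ∀ j, Matrix.trace ((B j)ᴴ * P) = c j * d := by
    intro j
    rw [← hc, Matrix.mul_sum]
    simp_rw [Matrix.mul_smul, Matrix.trace_sum, Matrix.trace_smul, trace_orth hd hB,
      smul_eq_mul]
    have : ∀ i ∈ univ, c i * (if j = i then (d:ℂ) else 0) = if j = i then c j * d else 0 := by
      intro i _
      by_cases h : j = i
      · subst h; simp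
      · simp [h]
    rw [Finset.sum_congr rfl this]
    simp
  conv_lhs => rw [← hc]
  refine Finset.sum_congr rfl fun j _ => ?_
  rw [hcoef, mul_div_cancel_right₀ _ hd']


lemma trace_tensor_mul (B : Fin (d ^ 2) → Matrix (Fin d) (Fin d) ℂ)
    (σ τ : Fin n → Fin (d ^ 2)) :
    Matrix.trace ((tensorFam B σ)ᴴ * tensorFam B τ)
      = ∏ i, Matrix.trace ((B (σ i))ᴴ * B (τ i)) := by
  rw [trace_conjT_mul]
  have h1 : ∀ x y : Fin n → Fin d,
      star ((tensorFam B σ) y x) * (tensorFam B τ) y x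
        = ∏ i, (star (B (σ i) (y i) (x i)) * B (τ i) (y i) (x i)) := by
    intro x y
    simp only [tensorFam, Matrix.of_apply, star_prod, Finset.prod_mul_distrib]
  calc (∑ x : Fin n → Fin d, ∑ y : Fin n → Fin d,
          star ((tensorFam B σ) y x) * (tensorFam B τ) y x)
      = ∑ x : Fin n → Fin d, ∏ i, ∑ b,
          (star (B (σ i) b (x i)) * B (τ i) b (x i)) := by
        refine Finset.sum_congr rfl fun x _ => ?_
        rw [Fintype.prod_sum (fun i b => star (B (σ i) b (x i)) * B (τ i) b (x i))]
        exact Finset.sum_congr rfl fun y _ => h1 x y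
    _ = ∏ i, ∑ a, ∑ b, (star (B (σ i) b a) * B (τ i) b a) := by
        rw [Fintype.prod_sum (fun i a => ∑ b, star (B (σ i) b a) * B (τ i) b a)]
    _ = ∏ i, Matrix.trace ((B (σ i))ᴴ * B (τ i)) :=
        Finset.prod_congr rfl fun i _ => (trace_conjT_mul _ _).symm

lemma trace_tensor_orth (hd : 0 < d) {B : Fin (d ^ 2) → Matrix (Fin d) (Fin d) ℂ}
    (hB : IsStdONB d B) (σ τ : Fin n → Fin (d ^ 2)) :
    Matrix.trace ((tensorFam B σ)ᴴ * tensorFam B τ)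
      = if σ = τ then ((d : ℂ) ^ n) else 0 := by
  rw [trace_tensor_mul]
  simp_rw [trace_orth hd hB]
  by_cases h : σ = τ
  · subst h; simp
  · rw [if_neg h]
    obtain ⟨i, hi⟩ := Function.ne_iff.1 h
    exact Finset.prod_eq_zero (Finset.mem_univ i) (by simp [hi])

lemma coeff_rep (hd : 0 < d) {B : Fin (d ^ 2) → Matrix (Fin d) (Fin d) ℂ}
    (hB : IsStdONB d B) (C : (Fin n → Fin (d ^ 2)) → ℂ) (τ : Fin n → Fin (d ^ 2)) :
    Matrix.trace ((tensorFam B τ)ᴴ * ∑ σ, C σ • tensorFam B σ) = C τ * (d : ℂ) ^ n := by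
  rw [Matrix.mul_sum]
  simp_rw [Matrix.mul_smul, Matrix.trace_sum, Matrix.trace_smul, trace_tensor_orth hd hB,
    smul_eq_mul]
  have : ∀ σ ∈ univ, (C σ * if τ = σ then ((d:ℂ)^n) else 0)
      = if τ = σ then C τ * (d:ℂ)^n else 0 := by
    intro σ _
    by_cases h : τ = σ
    · subst h; simp
    · simp [h]
  rw [Finset.sum_congr rfl this]
  simp

lemma tensor_of_pointwise {B : Fin (d ^ 2) → Matrix (Fin d) (Fin d) ℂ}
    (M : Fin n → Matrix (Fin d) (Fin d) ℂ) (m : Fin n → Fin (d ^ 2) → ℂ)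
    (hM : ∀ i, M i = ∑ k, m i k • B k) :
    Matrix.of (fun a b : Fin n → Fin d => ∏ i, M i (a i) (b i))
      = ∑ σ, (∏ i, m i (σ i)) • tensorFam B σ := by
  ext a b
  simp only [Matrix.of_apply, Matrix.sum_apply, Matrix.smul_apply, tensorFam, smul_eq_mul]
  calc ∏ i, M i (a i) (b i)
      = ∏ i, ∑ k, m i k * B k (a i) (b i) := by
        refine Finset.prod_congr rfl fun i _ => ?_
        rw [hM i]
        simp [Matrix.sum_apply]
    _ = ∑ σ : Fin n → Fin (d^2), ∏ i, (m i (σ i) * B (σ i) (a i) (b i)) :=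
        Fintype.prod_sum _
    _ = ∑ σ : Fin n → Fin (d^2), (∏ i, m i (σ i)) * ∏ i, B (σ i) (a i) (b i) := by
        simp [Finset.prod_mul_distrib]

lemma exists_rep (hd : 0 < d) {B : Fin (d ^ 2) → Matrix (Fin d) (Fin d) ℂ}
    (hB : IsStdONB d B) (P : Matrix (Fin n → Fin d) (Fin n → Fin d) ℂ) :
    ∃ C : (Fin n → Fin (d ^ 2)) → ℂ, P = ∑ σ, C σ • tensorFam B σ := by
  have hmem : P ∈ Submodule.span ℂ (Set.range (tensorFam B)) := by
    rw [matrix_eq_sum_single P]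
    refine Submodule.sum_mem _ fun x _ => Submodule.sum_mem _ fun y _ => ?_
    have h1 : Matrix.single x y (P x y) = P x y • Matrix.single x y (1:ℂ) := by
      rw [smul_single, smul_eq_mul, mul_one]
    rw [h1]
    refine Submodule.smul_mem _ _ ?_
    have h2 : Matrix.single x y (1:ℂ)
        = Matrix.of (fun a b : Fin n → Fin d =>
            ∏ i, Matrix.single (x i) (y i) (1:ℂ) (a i) (b i)) := by
      ext a b
      simp only [Matrix.of_apply, Matrix.single, Matrix.of_apply]
      by_cases hx : x = a ∧ y = b
      · obtain ⟨rfl, rfl⟩ := hx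
        simp
      · rw [if_neg hx]
        rw [not_and_or] at hx
        rcases hx with hx | hx
        · obtain ⟨i, hi⟩ := Function.ne_iff.1 hx
          exact (Finset.prod_eq_zero (Finset.mem_univ i) (by simp [hi])).symm
        · obtain ⟨i, hi⟩ := Function.ne_iff.1 hx
          exact (Finset.prod_eq_zero (Finset.mem_univ i) (by simp [hi])).symm
    rw [h2, tensor_of_pointwise (B := B)
      (fun i => Matrix.single (x i) (y i) (1:ℂ))
      (fun i k => Matrix.trace ((B k)ᴴ * Matrix.single (x i) (y i) (1:ℂ)) / d)
      (fun i => expand hd hB _)]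
    exact Submodule.sum_mem _ fun σ _ =>
      Submodule.smul_mem _ _ (Submodule.subset_span ⟨σ, rfl⟩)
  obtain ⟨c, hc⟩ := (Submodule.mem_span_range_iff_exists_fun ℂ).1 hmem
  exact ⟨c, hc.symm⟩

lemma bigExpand (hd : 0 < d) {B : Fin (d ^ 2) → Matrix (Fin d) (Fin d) ℂ}
    (hB : IsStdONB d B) (P : Matrix (Fin n → Fin d) (Fin n → Fin d) ℂ) :
    P = ∑ σ, (Matrix.trace ((tensorFam B σ)ᴴ * P) / (d : ℂ) ^ n) • tensorFam B σ := by
  have hd' : ((d : ℂ)) ^ n ≠ 0 := pow_ne_zero _ (by exact_mod_cast hd.ne')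
  obtain ⟨C, hC⟩ := exists_rep hd hB P
  conv_lhs => rw [hC]
  refine Finset.sum_congr rfl fun σ _ => ?_
  rw [hC, coeff_rep hd hB, mul_div_cancel_right₀ _ hd']

lemma parseval {ι m : Type*} [Fintype ι] [DecidableEq ι] [Fintype m]
    (V : ι → Matrix m m ℂ) (D : ℝ)
    (horth : ∀ i j, Matrix.trace ((V i)ᴴ * V j) = if i = j then (D : ℂ) else 0)
    (C : ι → ℂ) :
    Matrix.trace ((∑ i, C i • V i)ᴴ * (∑ i, C i • V i))
      = (((∑ i, Complex.normSq (C i)) * D : ℝ) : ℂ) := by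
  rw [Matrix.conjTranspose_sum]
  simp_rw [Matrix.conjTranspose_smul, Matrix.sum_mul, Matrix.mul_sum, Matrix.smul_mul,
    Matrix.mul_smul, Matrix.trace_sum, Matrix.trace_smul, horth, smul_eq_mul]
  have : ∀ i ∈ univ, (∑ j, star (C i) * (C j * if i = j then (D:ℂ) else 0))
      = Complex.normSq (C i) * D := by
    intro i _
    have h1 : ∀ j ∈ univ, star (C i) * (C j * if i = j then (D:ℂ) else 0)
        = if i = j then star (C i) * C i * D else 0 := by
      intro j _
      by_cases h : i = j
      · subst h; ring_nf; simp [mul_comm]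
      · simp [h]
    rw [Finset.sum_congr rfl h1]
    simp [Complex.normSq_eq_conj_mul_self, mul_assoc]
  rw [Finset.sum_congr rfl this]
  push_cast
  rw [Finset.sum_mul]

lemma sum_split {γ M : Type*} [Fintype γ] [DecidableEq γ] [AddCommMonoid M]
    (z : γ) (i₀ : Fin n) (f : (Fin n → γ) → M) :
    ∑ σ : Fin n → γ, f σ
      = ∑ j : γ, ∑ σ ∈ Finset.univ.filter (fun σ : Fin n → γ => σ i₀ = z),
          f (Function.update σ i₀ j) := by
  have h1 : ∀ j : γ,
      (∑ σ ∈ Finset.univ.filter (fun σ : Fin n → γ => σ i₀ = z), f (Function.update σ i₀ j))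
        = ∑ σ ∈ Finset.univ.filter (fun σ : Fin n → γ => σ i₀ = j), f σ := by
    intro j
    refine Finset.sum_nbij' (fun σ => Function.update σ i₀ j)
      (fun σ => Function.update σ i₀ z) ?_ ?_ ?_ ?_ ?_
    · intro σ hσ; simp [Finset.mem_filter]
    · intro σ hσ; simp [Finset.mem_filter]
    · intro σ hσ
      simp only [Finset.mem_filter, Finset.mem_univ, true_and] at hσ
      rw [Function.update_idem, ← hσ, Function.update_eq_self]
    · intro σ hσ
      simp only [Finset.mem_filter, Finset.mem_univ, true_and] at hσ
      rw [Function.update_idem, ← hσ, Function.update_eq_self]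
    · intro σ hσ; rfl
  simp_rw [h1]
  rw [Finset.sum_fiberwise_eq_sum_filter univ univ (fun σ : Fin n → γ => σ i₀) f]
  simp


lemma trace_kron_mul {α β : Type*} [Fintype α] [Fintype β]
    (A : Matrix α α ℂ) (Bm : Matrix β β ℂ) (ψ : Matrix (α × β) (α × β) ℂ) :
    Matrix.trace ((A ⊗ₖ Bm) * ψ)
      = ∑ a, ∑ b, ∑ a', ∑ b', A a a' * Bm b b' * ψ (a', b') (a, b) := by
  simp only [Matrix.trace, Matrix.diag, Matrix.mul_apply, Matrix.kroneckerMap_apply]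
  rw [Fintype.sum_prod_type]
  refine Finset.sum_congr rfl fun a _ => Finset.sum_congr rfl fun b _ => ?_
  rw [Fintype.sum_prod_type]

lemma kron_conjT {α β : Type*} (A : Matrix α α ℂ) (Bm : Matrix β β ℂ) :
    (A ⊗ₖ Bm)ᴴ = Aᴴ ⊗ₖ Bmᴴ := by
  ext ⟨a, b⟩ ⟨a', b'⟩
  simp [Matrix.conjTranspose_apply, Matrix.kroneckerMap_apply, mul_comm]

lemma kron_sum_right {α β ι : Type*} [Fintype ι] (A : Matrix α α ℂ) (s : Finset ι)
    (f : ι → Matrix β β ℂ) :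
    A ⊗ₖ (∑ j ∈ s, f j) = ∑ j ∈ s, A ⊗ₖ f j := by
  ext ⟨a, b⟩ ⟨a', b'⟩
  simp [Matrix.kroneckerMap_apply, Matrix.sum_apply, Finset.mul_sum]

section Psi

variable {dA dB : ℕ}
variable (ψ : Matrix (Fin dA × Fin dB) (Fin dA × Fin dB) ℂ)

lemma margA_trace (hA : 0 < dA)
    (hmargA : Matrix.of (fun a a' : Fin dA => ∑ b, ψ (a, b) (a', b)) =
      (dA : ℂ)⁻¹ • (1 : Matrix (Fin dA) (Fin dA) ℂ))
    (A : Matrix (Fin dA) (Fin dA) ℂ) :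
    Matrix.trace ((A ⊗ₖ (1 : Matrix (Fin dB) (Fin dB) ℂ)) * ψ)
      = Matrix.trace A / dA := by
  rw [trace_kron_mul]
  have h1 : ∀ a b a', (∑ b', A a a' * (1 : Matrix (Fin dB) (Fin dB) ℂ) b b' * ψ (a', b') (a, b))
      = A a a' * ψ (a', b) (a, b) := by
    intro a b a'
    rw [Finset.sum_eq_single b]
    · simp
    · intro b' _ hb'; simp [Matrix.one_apply, (Ne.symm hb')]
    · simp
  simp_rw [h1]
  have h2 : ∀ a a', (∑ b, A a a' * ψ (a', b) (a, b)) = A a a' * ((dA:ℂ)⁻¹ * if a' = a then 1 else 0) := by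
    intro a a'
    rw [← Finset.mul_sum]
    congr 1
    have := congrFun (congrFun hmargA a') a
    simpa [Matrix.one_apply] using this
  rw [Finset.sum_congr rfl (fun a _ => Finset.sum_comm (s := univ) (t := univ)
    (f := fun b a' => A a a' * ψ (a', b) (a, b)))]
  simp_rw [h2]
  have h3 : ∀ a, (∑ a', A a a' * ((dA:ℂ)⁻¹ * if a' = a then 1 else 0)) = A a a * (dA:ℂ)⁻¹ := by
    intro a
    rw [Finset.sum_eq_single a]
    · simp
    · intro a' _ ha'; simp [ha']
    · simp
  simp_rw [h3]
  rw [← Finset.sum_mul, div_eq_mul_inv, Matrix.trace]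
  rfl

lemma margB_trace (hB : 0 < dB)
    (hmargB : Matrix.of (fun b b' : Fin dB => ∑ a, ψ (a, b) (a, b')) =
      (dB : ℂ)⁻¹ • (1 : Matrix (Fin dB) (Fin dB) ℂ))
    (Q : Matrix (Fin dB) (Fin dB) ℂ) :
    Matrix.trace (((1 : Matrix (Fin dA) (Fin dA) ℂ) ⊗ₖ Q) * ψ)
      = Matrix.trace Q / dB := by
  rw [trace_kron_mul]
  have h1 : ∀ a b, (∑ a', ∑ b', (1 : Matrix (Fin dA) (Fin dA) ℂ) a a' * Q b b' * ψ (a', b') (a, b))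
      = ∑ b', Q b b' * ψ (a, b') (a, b) := by
    intro a b
    rw [Finset.sum_eq_single a]
    · simp
    · intro a' _ ha'; simp [Matrix.one_apply, (Ne.symm ha')]
    · simp
  simp_rw [h1]
  rw [Finset.sum_comm]
  rw [Finset.sum_congr rfl (fun b _ => Finset.sum_comm (s := univ) (t := univ)
    (f := fun a b' => Q b b' * ψ (a, b') (a, b)))]
  have h2 : ∀ b b', (∑ a, Q b b' * ψ (a, b') (a, b))
      = Q b b' * ((dB:ℂ)⁻¹ * if b' = b then 1 else 0) := by
    intro b b'
    rw [← Finset.mul_sum]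
    congr 1
    have := congrFun (congrFun hmargB b') b
    simpa [Matrix.one_apply] using this
  simp_rw [h2]
  have h3 : ∀ b, (∑ b', Q b b' * ((dB:ℂ)⁻¹ * if b' = b then 1 else 0)) = Q b b * (dB:ℂ)⁻¹ := by
    intro b
    rw [Finset.sum_eq_single b]
    · simp
    · intro b' _ hb'; simp [hb']
    · simp
  simp_rw [h3]
  rw [← Finset.sum_mul, div_eq_mul_inv, Matrix.trace]
  rfl

lemma abs_trace_conjT_mul_le {m : Type*} [Fintype m] (A C : Matrix m m ℂ) :
    ‖Matrix.trace (Aᴴ * C)‖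
      ≤ Real.sqrt (Matrix.trace (Aᴴ * A)).re * Real.sqrt (Matrix.trace (Cᴴ * C)).re := by
  have hA := trace_conjT_mul_self A
  have hC := trace_conjT_mul_self C
  rw [trace_conjT_mul, hA, hC, Complex.ofReal_re, Complex.ofReal_re]
  calc ‖∑ x : m, ∑ y : m, star (A y x) * C y x‖
      ≤ ∑ x : m, ∑ y : m, ‖A y x‖ * ‖C y x‖ := by
        refine (norm_sum_le _ _).trans ?_
        refine Finset.sum_le_sum fun x _ => ?_
        refine (norm_sum_le _ _).trans ?_
        refine Finset.sum_le_sum fun y _ => ?_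
        rw [norm_mul]
        simp
    _ ≤ Real.sqrt (∑ x : m, ∑ y : m, Complex.normSq (A y x))
        * Real.sqrt (∑ x : m, ∑ y : m, Complex.normSq (C y x)) := by
        have := Real.sum_mul_le_sqrt_mul_sqrt (Finset.univ (α := m × m))
          (fun p => ‖A p.2 p.1‖) (fun p => ‖C p.2 p.1‖)
        simp only [Fintype.sum_prod_type] at this
        simp_rw [Complex.sq_norm] at this
        exact this

lemma cs_psi {ι : Type*} [Fintype ι] [DecidableEq ι] (ψ : Matrix ι ι ℂ)
    (hpsd : ψ.PosSemidef) (X Y : Matrix ι ι ℂ) :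
    ‖Matrix.trace ((Xᴴ * Y) * ψ)‖
      ≤ Real.sqrt (Matrix.trace ((Xᴴ * X) * ψ)).re
        * Real.sqrt (Matrix.trace ((Yᴴ * Y) * ψ)).re := by
  obtain ⟨r, hr⟩ : ∃ r : Matrix ι ι ℂ, ψ = rᴴ * r := by
    open scoped MatrixOrder in
    exact CStarAlgebra.nonneg_iff_eq_star_mul_self.mp hpsd.nonneg
  subst hr
  have key : ∀ U V : Matrix ι ι ℂ,
      Matrix.trace ((Uᴴ * V) * (rᴴ * r)) = Matrix.trace ((U * rᴴ)ᴴ * (V * rᴴ)) := by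
    intro U V
    calc Matrix.trace ((Uᴴ * V) * (rᴴ * r))
        = Matrix.trace (((Uᴴ * V) * rᴴ) * r) := by rw [← Matrix.mul_assoc]
      _ = Matrix.trace (r * ((Uᴴ * V) * rᴴ)) := (Matrix.trace_mul_comm _ _)
      _ = Matrix.trace ((r * Uᴴ) * (V * rᴴ)) := by simp only [Matrix.mul_assoc]
      _ = Matrix.trace ((U * rᴴ)ᴴ * (V * rᴴ)) := by
          rw [Matrix.conjTranspose_mul, Matrix.conjTranspose_conjTranspose]
  rw [key X Y, key X X, key Y Y]
  exact abs_trace_conjT_mul_le _ _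

lemma cs_kron (hA : 0 < dA) (hB : 0 < dB) (hpsd : ψ.PosSemidef)
    (hmargA : Matrix.of (fun a a' : Fin dA => ∑ b, ψ (a, b) (a', b)) =
      (dA : ℂ)⁻¹ • (1 : Matrix (Fin dA) (Fin dA) ℂ))
    (hmargB : Matrix.of (fun b b' : Fin dB => ∑ a, ψ (a, b) (a, b')) =
      (dB : ℂ)⁻¹ • (1 : Matrix (Fin dB) (Fin dB) ℂ))
    (M : Matrix (Fin dA) (Fin dA) ℂ) (Q : Matrix (Fin dB) (Fin dB) ℂ) :
    ‖Matrix.trace ((Mᴴ ⊗ₖ Q) * ψ)‖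
      ≤ Real.sqrt ((Matrix.trace (Mᴴ * M)).re / dA)
        * Real.sqrt ((Matrix.trace (Qᴴ * Q)).re / dB) := by
  have h1 : Mᴴ ⊗ₖ Q = (M ⊗ₖ (1 : Matrix (Fin dB) (Fin dB) ℂ))ᴴ
      * ((1 : Matrix (Fin dA) (Fin dA) ℂ) ⊗ₖ Q) := by
    rw [kron_conjT, Matrix.conjTranspose_one, ← Matrix.mul_kronecker_mul, Matrix.mul_one,
      Matrix.one_mul]
  rw [h1]
  refine (cs_psi ψ hpsd _ _).trans ?_
  have e1 : (M ⊗ₖ (1 : Matrix (Fin dB) (Fin dB) ℂ))ᴴ * (M ⊗ₖ (1 : Matrix (Fin dB) (Fin dB) ℂ))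
      = (Mᴴ * M) ⊗ₖ (1 : Matrix (Fin dB) (Fin dB) ℂ) := by
    rw [kron_conjT, Matrix.conjTranspose_one, ← Matrix.mul_kronecker_mul, Matrix.mul_one]
  have e2 : ((1 : Matrix (Fin dA) (Fin dA) ℂ) ⊗ₖ Q)ᴴ * ((1 : Matrix (Fin dA) (Fin dA) ℂ) ⊗ₖ Q)
      = (1 : Matrix (Fin dA) (Fin dA) ℂ) ⊗ₖ (Qᴴ * Q) := by
    rw [kron_conjT, Matrix.conjTranspose_one, ← Matrix.mul_kronecker_mul, Matrix.one_mul]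
  rw [e1, e2, margA_trace ψ hA hmargA, margB_trace ψ hB hmargB]
  have hre : ∀ (z : ℂ) (k : ℕ), (z / (k:ℂ)).re = z.re / k := by
    intro z k
    rw [show ((k:ℂ)) = ((k:ℝ):ℂ) by push_cast; ring, Complex.div_ofReal_re]
  rw [hre, hre]

lemma trace_std_conjT_mul {m : Type*} [Fintype m] [DecidableEq m] (a b : m)
    (X : Matrix m m ℂ) :
    Matrix.trace ((Matrix.single a b (1:ℂ))ᴴ * X) = X a b := by
  rw [trace_conjT_mul]
  have h : ∀ x y, star ((Matrix.single a b (1:ℂ)) y x) * X y x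
      = if a = y ∧ b = x then X y x else 0 := by
    intro x y
    by_cases h : a = y ∧ b = x <;> simp [Matrix.single, h]
  simp_rw [h]
  rw [Finset.sum_comm]
  simp [ite_and, Finset.sum_ite_eq]

lemma matrix_ext_trace {m : Type*} [Fintype m] [DecidableEq m] (X Y : Matrix m m ℂ)
    (h : ∀ M : Matrix m m ℂ, Matrix.trace (Mᴴ * X) = Matrix.trace (Mᴴ * Y)) : X = Y := by
  ext a b
  have := h (Matrix.single a b 1)
  rwa [trace_std_conjT_mul, trace_std_conjT_mul] at this

section T

variable (hA : 0 < dA) (hB : 0 < dB)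
variable (T : Matrix (Fin dB) (Fin dB) ℂ → Matrix (Fin dA) (Fin dA) ℂ)
variable (hT : ∀ (M : Matrix (Fin dA) (Fin dA) ℂ) (Q : Matrix (Fin dB) (Fin dB) ℂ),
      Matrix.trace ((Mᴴ ⊗ₖ Q) * ψ) = Matrix.trace (Mᴴ * T Q) / (dA : ℂ))

include hA hT

lemma hT' : ∀ (M : Matrix (Fin dA) (Fin dA) ℂ) (Q : Matrix (Fin dB) (Fin dB) ℂ),
    Matrix.trace (Mᴴ * T Q) = (dA : ℂ) * Matrix.trace ((Mᴴ ⊗ₖ Q) * ψ) := by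
  intro M Q
  rw [hT M Q, mul_div_cancel₀]
  exact_mod_cast hA.ne'

lemma T_one
    (hmargA : Matrix.of (fun a a' : Fin dA => ∑ b, ψ (a, b) (a', b)) =
      (dA : ℂ)⁻¹ • (1 : Matrix (Fin dA) (Fin dA) ℂ)) :
    T 1 = 1 := by
  apply matrix_ext_trace
  intro M
  rw [hT' ψ hA T hT, margA_trace ψ hA hmargA, Matrix.mul_one]
  rw [mul_div_cancel₀]
  exact_mod_cast hA.ne'

lemma T_trace (Q : Matrix (Fin dB) (Fin dB) ℂ) (hBpos : 0 < dB)
    (hmargB : Matrix.of (fun b b' : Fin dB => ∑ a, ψ (a, b) (a, b')) =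
      (dB : ℂ)⁻¹ • (1 : Matrix (Fin dB) (Fin dB) ℂ)) :
    Matrix.trace (T Q) = (dA : ℂ) * (Matrix.trace Q / dB) := by
  have := hT' ψ hA T hT 1 Q
  rw [Matrix.conjTranspose_one, Matrix.one_mul] at this
  rwa [margB_trace ψ hBpos hmargB] at this

lemma T_sum {ι : Type*} [Fintype ι] (v : ι → ℂ) (f : ι → Matrix (Fin dB) (Fin dB) ℂ) :
    T (∑ j, v j • f j) = ∑ j, v j • T (f j) := by
  apply matrix_ext_trace
  intro M
  rw [hT' ψ hA T hT]
  have h1 : Mᴴ ⊗ₖ (∑ j, v j • f j) = ∑ j, v j • (Mᴴ ⊗ₖ f j) := by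
    rw [kron_sum_right]
    exact Finset.sum_congr rfl fun j _ => Matrix.kronecker_smul _ _ _
  rw [h1, Matrix.sum_mul, Matrix.trace_sum, Matrix.mul_sum, Matrix.trace_sum,
    Finset.mul_sum]
  refine Finset.sum_congr rfl fun j _ => ?_
  rw [Matrix.smul_mul, Matrix.trace_smul, Matrix.mul_smul, Matrix.trace_smul,
    smul_eq_mul, smul_eq_mul, hT' ψ hA T hT]
  ring

end T

def corrSet (ψ : Matrix (Fin dA × Fin dB) (Fin dA × Fin dB) ℂ) : Set ℝ :=
  {r : ℝ | ∃ (P : Matrix (Fin dA) (Fin dA) ℂ) (Q : Matrix (Fin dB) (Fin dB) ℂ),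
    Matrix.trace P = 0 ∧ Matrix.trace Q = 0 ∧
    Matrix.trace (Pᴴ * P) = (Fintype.card (Fin dA) : ℂ) ∧
    Matrix.trace (Qᴴ * Q) = (Fintype.card (Fin dB) : ℂ) ∧
    r = ‖Matrix.trace ((Pᴴ ⊗ₖ Q) * ψ)‖}

lemma maxCorr_eq (ψ : Matrix (Fin dA × Fin dB) (Fin dA × Fin dB) ℂ) :
    maxCorr ψ = sSup (corrSet ψ) := rfl

lemma corrSet_le_one (hA : 0 < dA) (hB : 0 < dB) (hpsd : ψ.PosSemidef)
    (hmargA : Matrix.of (fun a a' : Fin dA => ∑ b, ψ (a, b) (a', b)) =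
      (dA : ℂ)⁻¹ • (1 : Matrix (Fin dA) (Fin dA) ℂ))
    (hmargB : Matrix.of (fun b b' : Fin dB => ∑ a, ψ (a, b) (a, b')) =
      (dB : ℂ)⁻¹ • (1 : Matrix (Fin dB) (Fin dB) ℂ)) :
    ∀ r ∈ corrSet ψ, r ≤ 1 := by
  rintro r ⟨P, Q, -, -, hP, hQ, rfl⟩
  rw [Fintype.card_fin] at hP
  rw [Fintype.card_fin] at hQ
  refine (cs_kron ψ hA hB hpsd hmargA hmargB P Q).trans ?_
  rw [hP, hQ]
  simp only [Complex.natCast_re]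
  rw [div_self (by exact_mod_cast hA.ne'), div_self (by exact_mod_cast hB.ne')]
  simp

lemma corrSet_bdd (hA : 0 < dA) (hB : 0 < dB) (hpsd : ψ.PosSemidef)
    (hmargA : Matrix.of (fun a a' : Fin dA => ∑ b, ψ (a, b) (a', b)) =
      (dA : ℂ)⁻¹ • (1 : Matrix (Fin dA) (Fin dA) ℂ))
    (hmargB : Matrix.of (fun b b' : Fin dB => ∑ a, ψ (a, b) (a, b')) =
      (dB : ℂ)⁻¹ • (1 : Matrix (Fin dB) (Fin dB) ℂ)) :
    BddAbove (corrSet ψ) :=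
  ⟨1, fun r hr => corrSet_le_one ψ hA hB hpsd hmargA hmargB r hr⟩

lemma maxCorr_nonneg (hA : 0 < dA) (hB : 0 < dB) (hpsd : ψ.PosSemidef)
    (hmargA : Matrix.of (fun a a' : Fin dA => ∑ b, ψ (a, b) (a', b)) =
      (dA : ℂ)⁻¹ • (1 : Matrix (Fin dA) (Fin dA) ℂ))
    (hmargB : Matrix.of (fun b b' : Fin dB => ∑ a, ψ (a, b) (a, b')) =
      (dB : ℂ)⁻¹ • (1 : Matrix (Fin dB) (Fin dB) ℂ)) :
    0 ≤ maxCorr ψ := by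
  rw [maxCorr_eq]
  by_cases h : (corrSet ψ).Nonempty
  · obtain ⟨r, hr⟩ := h
    have h0 : 0 ≤ r := by
      obtain ⟨P, Q, -, -, -, -, rfl⟩ := hr
      exact norm_nonneg _
    exact h0.trans (le_csSup (corrSet_bdd ψ hA hB hpsd hmargA hmargB) hr)
  · rw [Set.not_nonempty_iff_eq_empty] at h
    rw [h, Real.sSup_empty]

lemma siteBound (hA : 0 < dA) (hB : 0 < dB) (hpsd : ψ.PosSemidef)
    (hmargA : Matrix.of (fun a a' : Fin dA => ∑ b, ψ (a, b) (a', b)) =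
      (dA : ℂ)⁻¹ • (1 : Matrix (Fin dA) (Fin dA) ℂ))
    (hmargB : Matrix.of (fun b b' : Fin dB => ∑ a, ψ (a, b) (a, b')) =
      (dB : ℂ)⁻¹ • (1 : Matrix (Fin dB) (Fin dB) ℂ))
    (T : Matrix (Fin dB) (Fin dB) ℂ → Matrix (Fin dA) (Fin dA) ℂ)
    (hT : ∀ (M : Matrix (Fin dA) (Fin dA) ℂ) (Q : Matrix (Fin dB) (Fin dB) ℂ),
      Matrix.trace ((Mᴴ ⊗ₖ Q) * ψ) = Matrix.trace (Mᴴ * T Q) / (dA : ℂ))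
    (BA : Fin (dA ^ 2) → Matrix (Fin dA) (Fin dA) ℂ) (hBA : IsStdONB dA BA)
    (BB : Fin (dB ^ 2) → Matrix (Fin dB) (Fin dB) ℂ) (hBB : IsStdONB dB BB)
    (v : Fin (dB ^ 2) → ℂ) (hv : ∀ j : Fin (dB ^ 2), (j : ℕ) = 0 → v j = 0) :
    ∑ k, Complex.normSq (∑ j, v j * (Matrix.trace ((BA k)ᴴ * T (BB j)) / (dA : ℂ)))
      ≤ (maxCorr ψ) ^ 2 * ∑ j, Complex.normSq (v j) := by
  have hdA : (dA : ℂ) ≠ 0 := by exact_mod_cast hA.ne'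
  set ρ := maxCorr ψ with hρdef
  have hρ0 : 0 ≤ ρ := maxCorr_nonneg ψ hA hB hpsd hmargA hmargB
  set c : Fin (dB ^ 2) → Fin (dA ^ 2) → ℂ :=
    fun j k => Matrix.trace ((BA k)ᴴ * T (BB j)) / (dA : ℂ) with hcdef
  set w : Fin (dA ^ 2) → ℂ := fun k => ∑ j, v j * c j k with hwdef
  set Q : Matrix (Fin dB) (Fin dB) ℂ := ∑ j, v j • BB j with hQdef
  set SW : ℝ := ∑ k, Complex.normSq (w k) with hSWdef
  set SV : ℝ := ∑ j, Complex.normSq (v j) with hSVdef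
  have hSW0 : 0 ≤ SW := Finset.sum_nonneg fun k _ => Complex.normSq_nonneg _
  have hSV0 : 0 ≤ SV := Finset.sum_nonneg fun j _ => Complex.normSq_nonneg _
  show SW ≤ ρ ^ 2 * SV
  have hTQ : T Q = ∑ k, w k • BA k := by
    rw [hQdef, T_sum ψ hA T hT v BB]
    calc ∑ j, v j • T (BB j) = ∑ j, ∑ k, (v j * c j k) • BA k := by
          refine Finset.sum_congr rfl fun j _ => ?_
          conv_lhs => rw [expand hA hBA (T (BB j))]
          rw [Finset.smul_sum]
          exact Finset.sum_congr rfl fun k _ => by rw [smul_smul]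
      _ = ∑ k, ∑ j, (v j * c j k) • BA k := Finset.sum_comm
      _ = ∑ k, w k • BA k := by
          refine Finset.sum_congr rfl fun k _ => ?_
          rw [hwdef, ← Finset.sum_smul]
  have horthA : ∀ i j, Matrix.trace ((BA i)ᴴ * BA j)
      = if i = j then (((dA : ℝ)) : ℂ) else 0 := by
    intro i j; rw [trace_orth hA hBA]; norm_cast; split <;> simp
  have horthB : ∀ i j, Matrix.trace ((BB i)ᴴ * BB j)
      = if i = j then (((dB : ℝ)) : ℂ) else 0 := by
    intro i j; rw [trace_orth hB hBB]; norm_cast; split <;> simp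
  have hQn : Matrix.trace (Qᴴ * Q) = ((SV * dB : ℝ) : ℂ) := by
    rw [hQdef]; exact parseval BB dB horthB v
  have hMn : Matrix.trace ((T Q)ᴴ * T Q) = ((SW * dA : ℝ) : ℂ) := by
    rw [hTQ]; exact parseval BA dA horthA w
  have zB : Fin (dB ^ 2) := ⟨0, pow_pos hB 2⟩
  have htrBB : ∀ j, Matrix.trace (BB j) = if (⟨0, pow_pos hB 2⟩ : Fin (dB ^ 2)) = j
      then (dB : ℂ) else 0 := by
    intro j
    have := trace_orth hB hBB (⟨0, pow_pos hB 2⟩ : Fin (dB ^ 2)) j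
    rwa [hBB.2.1 ⟨0, pow_pos hB 2⟩ rfl, Matrix.conjTranspose_one, Matrix.one_mul] at this
  have htrQ : Matrix.trace Q = 0 := by
    rw [hQdef, Matrix.trace_sum]
    simp_rw [Matrix.trace_smul, htrBB, smul_eq_mul]
    rw [Finset.sum_eq_single (⟨0, pow_pos hB 2⟩ : Fin (dB ^ 2))]
    · rw [hv _ rfl]; simp
    · intro j _ hj; simp [Ne.symm hj]
    · simp
  have htrTQ : Matrix.trace (T Q) = 0 := by
    rw [T_trace ψ hA T hT Q hB hmargB, htrQ]
    simp
  have hkey : Matrix.trace (((T Q)ᴴ ⊗ₖ Q) * ψ) = ((SW : ℝ) : ℂ) := by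
    rw [hT (T Q) Q, hMn]
    push_cast
    rw [mul_div_cancel_right₀ _ hdA]
  rcases eq_or_ne SW 0 with hSW | hSW
  · rw [hSW]
    exact mul_nonneg (sq_nonneg _) hSV0
  · have hSWpos : 0 < SW := lt_of_le_of_ne hSW0 (Ne.symm hSW)
    have hSVpos : 0 < SV := by
      rcases eq_or_ne SV 0 with h0 | h0
      · exfalso
        have h0' : ∑ j, Complex.normSq (v j) = 0 := by rw [← hSVdef]; exact h0
        have hvz : ∀ j, v j = 0 := by
          intro j
          have h2 := (Finset.sum_eq_zero_iff_of_nonneg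
            (fun j (_ : j ∈ Finset.univ) => Complex.normSq_nonneg (v j))).1 h0' j
            (Finset.mem_univ j)
          exact Complex.normSq_eq_zero.1 h2
        apply hSW
        rw [hSWdef]
        refine Finset.sum_eq_zero fun k _ => ?_
        have : w k = 0 := by
          rw [hwdef]
          exact Finset.sum_eq_zero fun j _ => by rw [hvz j, zero_mul]
        rw [this]; simp
      · exact lt_of_le_of_ne hSV0 (Ne.symm h0)
    set x : ℝ := Real.sqrt SW with hxdef
    set y : ℝ := Real.sqrt SV with hydef
    have hx : 0 < x := Real.sqrt_pos.2 hSWpos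
    have hy : 0 < y := Real.sqrt_pos.2 hSVpos
    have hxx : x * x = SW := Real.mul_self_sqrt hSW0
    have hyy : y * y = SV := Real.mul_self_sqrt hSV0
    set P : Matrix (Fin dA) (Fin dA) ℂ := ((x⁻¹ : ℝ) : ℂ) • T Q with hPdef
    set Q' : Matrix (Fin dB) (Fin dB) ℂ := ((y⁻¹ : ℝ) : ℂ) • Q with hQ'def
    have hsmulTr : ∀ {m : Type} [Fintype m] (s : ℝ) (X : Matrix m m ℂ),
        Matrix.trace ((((s : ℂ)) • X)ᴴ * (((s : ℂ)) • X))
          = ((s * s : ℝ) : ℂ) * Matrix.trace (Xᴴ * X) := by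
      intro m _ s X
      rw [Matrix.conjTranspose_smul, Matrix.smul_mul, Matrix.mul_smul, Matrix.trace_smul,
        Matrix.trace_smul]
      rw [smul_eq_mul, smul_eq_mul, ← mul_assoc]
      congr 1
      rw [Complex.star_def, Complex.conj_ofReal]
      push_cast
      ring
    have hnP : Matrix.trace (Pᴴ * P) = (Fintype.card (Fin dA) : ℂ) := by
      rw [hPdef, hsmulTr x⁻¹ (T Q), hMn, Fintype.card_fin]
      rw [← Complex.ofReal_mul]
      congr 1
      field_simp
      rw [← hxx]
      ring
    have hnQ' : Matrix.trace (Q'ᴴ * Q') = (Fintype.card (Fin dB) : ℂ) := by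
      rw [hQ'def, hsmulTr y⁻¹ Q, hQn, Fintype.card_fin]
      rw [← Complex.ofReal_mul]
      congr 1
      field_simp
      rw [← hyy]
      ring
    have htP : Matrix.trace P = 0 := by rw [hPdef, Matrix.trace_smul, htrTQ, smul_zero]
    have htQ' : Matrix.trace Q' = 0 := by rw [hQ'def, Matrix.trace_smul, htrQ, smul_zero]
    have habs : ‖Matrix.trace ((Pᴴ ⊗ₖ Q') * ψ)‖ = x⁻¹ * y⁻¹ * SW := by
      have hPH : Pᴴ = ((x⁻¹ : ℝ) : ℂ) • (T Q)ᴴ := by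
        rw [hPdef, Matrix.conjTranspose_smul, Complex.star_def, Complex.conj_ofReal]
      rw [hPH, hQ'def, Matrix.smul_kronecker, Matrix.kronecker_smul, Matrix.smul_mul,
        Matrix.smul_mul, Matrix.trace_smul, Matrix.trace_smul, hkey]
      rw [smul_eq_mul, smul_eq_mul]
      rw [show (((x⁻¹ : ℝ) : ℂ) * ((((y⁻¹ : ℝ) : ℂ)) * ((SW : ℝ) : ℂ)))
          = (((x⁻¹ * y⁻¹ * SW : ℝ)) : ℂ) by push_cast; ring]
      rw [Complex.norm_real, Real.norm_eq_abs, abs_of_nonneg]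
      positivity
    have hmem : (x⁻¹ * y⁻¹ * SW) ∈ corrSet ψ :=
      ⟨P, Q', htP, htQ', hnP, hnQ', habs.symm⟩
    have hle : x⁻¹ * y⁻¹ * SW ≤ ρ := by
      rw [hρdef, maxCorr_eq]
      exact le_csSup (corrSet_bdd ψ hA hB hpsd hmargA hmargB) hmem
    have hxy : x ≤ ρ * y := by
      have h1 : x⁻¹ * y⁻¹ * SW = x / y := by
        rw [← hxx]; field_simp
      rw [h1, div_le_iff₀ hy] at hle
      exact hle
    calc SW = x * x := hxx.symm
      _ ≤ (ρ * y) * (ρ * y) := mul_self_le_mul_self hx.le hxy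
      _ = ρ ^ 2 * SV := by rw [← hyy]; ring

section T2

variable (T : Matrix (Fin dB) (Fin dB) ℂ → Matrix (Fin dA) (Fin dA) ℂ)

set_option maxHeartbeats 1000000 in
lemma Tn_rep {n : ℕ} (hA : 0 < dA)
    (BA : Fin (dA ^ 2) → Matrix (Fin dA) (Fin dA) ℂ) (hBA : IsStdONB dA BA)
    (BB : Fin (dB ^ 2) → Matrix (Fin dB) (Fin dB) ℂ)
    (Tn : Matrix (Fin n → Fin dB) (Fin n → Fin dB) ℂ →
      Matrix (Fin n → Fin dA) (Fin n → Fin dA) ℂ)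
    (hTnlin : IsLinearMap ℂ Tn)
    (hTnprod : ∀ Q : Fin n → Matrix (Fin dB) (Fin dB) ℂ,
      Tn (Matrix.of fun x y => ∏ i, Q i (x i) (y i)) =
        Matrix.of fun x y => ∏ i, T (Q i) (x i) (y i))
    (u : (Fin n → Fin (dB ^ 2)) → ℂ) :
    Tn (∑ σ, u σ • tensorFam BB σ)
      = ∑ τ, (∑ σ, u σ * ∏ i, (Matrix.trace ((BA (τ i))ᴴ * T (BB (σ i))) / (dA : ℂ)))
          • tensorFam BA τ := by
  have hTn1 : ∀ σ : Fin n → Fin (dB ^ 2), Tn (tensorFam BB σ)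
      = ∑ τ, (∏ i, (Matrix.trace ((BA (τ i))ᴴ * T (BB (σ i))) / (dA : ℂ)))
          • tensorFam BA τ := by
    intro σ
    have h0 : tensorFam BB σ
        = Matrix.of fun x y => ∏ i, (fun i => BB (σ i)) i (x i) (y i) := rfl
    rw [h0, hTnprod]
    exact tensor_of_pointwise (B := BA) _ _ (fun i => expand hA hBA (T (BB (σ i))))
  let L := IsLinearMap.mk' Tn hTnlin
  have hL : ∀ X, Tn X = L X := fun X => rfl
  rw [hL, map_sum]
  have hsm : ∀ σ, L (u σ • tensorFam BB σ) = u σ • Tn (tensorFam BB σ) :=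
    fun σ => L.map_smul _ _
  rw [Finset.sum_congr rfl fun σ _ => hsm σ]
  simp_rw [hTn1, Finset.smul_sum, smul_smul]
  rw [Finset.sum_comm]
  simp_rw [← Finset.sum_smul]

end T2

end Psi

section Tensor

variable {γB γA : Type*} [Fintype γB] [DecidableEq γB] [Fintype γA] [DecidableEq γA]

lemma tensorBound (zb : γB) (za : γA) (c : γB → γA → ℂ) (ρ : ℝ) (hρ0 : 0 ≤ ρ)
    (hc0 : ∀ k, c zb k = if k = za then 1 else 0)
    (hsite : ∀ v : γB → ℂ, v zb = 0 →
      ∑ k, Complex.normSq (∑ j, v j * c j k) ≤ ρ ^ 2 * ∑ j, Complex.normSq (v j))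
    {n : ℕ} (S : Finset (Fin n)) (v : (Fin n → γB) → ℂ)
    (hv : ∀ σ, v σ ≠ 0 → (Finset.univ.filter fun i => σ i ≠ zb) = S) :
    ∑ τ : Fin n → γA, Complex.normSq (∑ σ, v σ * ∏ i, c (σ i) (τ i))
      ≤ ρ ^ (2 * S.card) * ∑ σ, Complex.normSq (v σ) := by
  classical
  induction S using Finset.induction_on generalizing v with
  | empty =>
    set σz : Fin n → γB := fun _ => zb with hσz
    set τz : Fin n → γA := fun _ => za with hτz
    have hsupp : ∀ σ, v σ ≠ 0 → σ = σz := by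
      intro σ hσ
      funext i
      by_contra hi
      have : i ∈ Finset.univ.filter fun i => σ i ≠ zb := by
        simp only [Finset.mem_filter, Finset.mem_univ, true_and]
        exact hi
      rw [hv σ hσ] at this
      exact absurd this (Finset.notMem_empty i)
    have hinner : ∀ τ : Fin n → γA, (∑ σ, v σ * ∏ i, c (σ i) (τ i))
        = v σz * (if τ = τz then 1 else 0) := by
      intro τ
      rw [Finset.sum_eq_single σz]
      · congr 1
        simp_rw [hσz]
        simp_rw [hc0]
        by_cases hτ : τ = τz
        · subst hτ; simp [hτz]
        · rw [if_neg hτ]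
          obtain ⟨i, hi⟩ := Function.ne_iff.1 hτ
          refine Finset.prod_eq_zero (Finset.mem_univ i) ?_
          rw [if_neg]
          exact hi
      · intro σ _ hσ
        rcases eq_or_ne (v σ) 0 with h | h
        · rw [h, zero_mul]
        · exact absurd (hsupp σ h) hσ
      · intro h; exact absurd (Finset.mem_univ σz) h
    simp_rw [hinner]
    have hLHS : ∑ τ : Fin n → γA, Complex.normSq (v σz * (if τ = τz then 1 else 0))
        = Complex.normSq (v σz) := by
      rw [Finset.sum_eq_single τz]
      · simp
      · intro τ _ hτ; rw [if_neg hτ]; simp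
      · intro h; exact absurd (Finset.mem_univ τz) h
    rw [hLHS]
    simp only [Finset.card_empty, Nat.mul_zero, pow_zero, one_mul]
    exact Finset.single_le_sum
      (fun σ (_ : σ ∈ Finset.univ) => Complex.normSq_nonneg (v σ)) (Finset.mem_univ σz)
  | @insert i₀ S hi₀ IH =>
    set fB : Finset (Fin n → γB) := Finset.univ.filter (fun σ => σ i₀ = zb) with hfB
    set fA : Finset (Fin n → γA) := Finset.univ.filter (fun τ => τ i₀ = za) with hfA
    set G : γB → (Fin n → γA) → ℂ := fun j τ =>
      ∑ σ ∈ fB, v (Function.update σ i₀ j) * ∏ i ∈ Finset.univ.erase i₀, c (σ i) (τ i)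
      with hG
    have hprod : ∀ (σ : Fin n → γB) (j : γB) (τ : Fin n → γA),
        (∏ i, c (Function.update σ i₀ j i) (τ i))
          = c j (τ i₀) * ∏ i ∈ Finset.univ.erase i₀, c (σ i) (τ i) := by
      intro σ j τ
      rw [← Finset.mul_prod_erase Finset.univ
        (fun i => c (Function.update σ i₀ j i) (τ i)) (Finset.mem_univ i₀)]
      rw [Function.update_self]
      congr 1
      refine Finset.prod_congr rfl fun i hi => ?_
      rw [Function.update_of_ne (Finset.ne_of_mem_erase hi)]
    have hE1 : ∀ τ : Fin n → γA, (∑ σ, v σ * ∏ i, c (σ i) (τ i))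
        = ∑ j, c j (τ i₀) * G j τ := by
      intro τ
      rw [sum_split zb i₀ (fun σ => v σ * ∏ i, c (σ i) (τ i))]
      refine Finset.sum_congr rfl fun j _ => ?_
      rw [hG]
      simp only
      rw [Finset.mul_sum]
      refine Finset.sum_congr rfl fun σ hσ => ?_
      rw [hprod σ j τ]
      ring
    have hE2 : ∀ (j : γB) (τ : Fin n → γA) (k : γA),
        G j (Function.update τ i₀ k) = G j τ := by
      intro j τ k
      rw [hG]
      simp only
      refine Finset.sum_congr rfl fun σ _ => ?_
      congr 1
      refine Finset.prod_congr rfl fun i hi => ?_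
      rw [Function.update_of_ne (Finset.ne_of_mem_erase hi)]
    have hvfB : ∀ σ ∈ fB, v σ = 0 := by
      intro σ hσ
      rw [hfB, Finset.mem_filter] at hσ
      by_contra h
      have := hv σ h
      have hi₀mem : i₀ ∈ Finset.univ.filter fun i => σ i ≠ zb := by
        rw [this]; exact Finset.mem_insert_self _ _
      rw [Finset.mem_filter] at hi₀mem
      exact hi₀mem.2 hσ.2
    have hE4 : ∀ τ : Fin n → γA, G zb τ = 0 := by
      intro τ
      rw [hG]
      simp only
      refine Finset.sum_eq_zero fun σ hσ => ?_
      have hσ' : σ i₀ = zb := by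
        rw [hfB, Finset.mem_filter] at hσ; exact hσ.2
      have : Function.update σ i₀ zb = σ := by
        rw [← hσ', Function.update_eq_self]
      rw [this, hvfB σ hσ, zero_mul]
    have hE3 : ∑ τ : Fin n → γA, Complex.normSq (∑ σ, v σ * ∏ i, c (σ i) (τ i))
        = ∑ τ₀ ∈ fA, ∑ k, Complex.normSq (∑ j, G j τ₀ * c j k) := by
      rw [sum_split za i₀ (fun τ => Complex.normSq (∑ σ, v σ * ∏ i, c (σ i) (τ i)))]
      rw [Finset.sum_comm]
      refine Finset.sum_congr rfl fun τ₀ hτ₀ => Finset.sum_congr rfl fun k _ => ?_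
      congr 1
      rw [hE1]
      refine Finset.sum_congr rfl fun j _ => ?_
      rw [Function.update_self, hE2, mul_comm]
    -- main chain
    rw [hE3]
    have step1 : ∑ τ₀ ∈ fA, ∑ k, Complex.normSq (∑ j, G j τ₀ * c j k)
        ≤ ∑ τ₀ ∈ fA, ρ ^ 2 * ∑ j, Complex.normSq (G j τ₀) :=
      Finset.sum_le_sum fun τ₀ _ => hsite (fun j => G j τ₀) (hE4 τ₀)
    refine step1.trans ?_
    rw [← Finset.mul_sum]
    have hswap : ∑ τ₀ ∈ fA, ∑ j, Complex.normSq (G j τ₀)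
        = ∑ j, ∑ τ₀ ∈ fA, Complex.normSq (G j τ₀) := Finset.sum_comm
    rw [hswap]
    have step2 : ∀ j : γB, ∑ τ₀ ∈ fA, Complex.normSq (G j τ₀)
        ≤ ρ ^ (2 * S.card) * ∑ σ ∈ fB, Complex.normSq (v (Function.update σ i₀ j)) := by
      intro j
      set vj : (Fin n → γB) → ℂ :=
        fun σ => if σ i₀ = zb then v (Function.update σ i₀ j) else 0 with hvj
      have hvjsupp : ∀ σ, vj σ ≠ 0 → (Finset.univ.filter fun i => σ i ≠ zb) = S := by
        intro σ hσ
        rw [hvj] at hσ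
        simp only at hσ
        by_cases hσi₀ : σ i₀ = zb
        swap
        · rw [if_neg hσi₀] at hσ; exact absurd rfl hσ
        rw [if_pos hσi₀] at hσ
        have hupd := hv _ hσ
        ext i
        simp only [Finset.mem_filter, Finset.mem_univ, true_and]
        rcases eq_or_ne i i₀ with rfl | hii₀
        · constructor
          · intro h; exact absurd hσi₀ h
          · intro h; exact absurd h hi₀
        · have hupd_i : Function.update σ i₀ j i = σ i := Function.update_of_ne hii₀ _ _
          constructor
          · intro h
            have : i ∈ Finset.univ.filter
                fun i' => Function.update σ i₀ j i' ≠ zb := by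
              simp only [Finset.mem_filter, Finset.mem_univ, true_and]
              rw [hupd_i]; exact h
            rw [hupd] at this
            rcases Finset.mem_insert.1 this with h' | h'
            · exact absurd h' hii₀
            · exact h'
          · intro h
            have : i ∈ insert i₀ S := Finset.mem_insert_of_mem h
            rw [← hupd] at this
            simp only [Finset.mem_filter, Finset.mem_univ, true_and] at this
            rwa [hupd_i] at this
      have hIH := IH vj hvjsupp
      have hinner_vj : ∀ τ : Fin n → γA, (∑ σ, vj σ * ∏ i, c (σ i) (τ i))
          = (if τ i₀ = za then 1 else 0) * G j τ := by
        intro τ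
        rw [hvj]
        simp only
        rw [show (∑ σ : Fin n → γB,
            (if σ i₀ = zb then v (Function.update σ i₀ j) else 0) * ∏ i, c (σ i) (τ i))
          = ∑ σ : Fin n → γB,
            (if σ i₀ = zb then v (Function.update σ i₀ j) * ∏ i, c (σ i) (τ i) else 0) from
          Finset.sum_congr rfl fun σ _ => by split <;> simp]
        rw [← Finset.sum_filter, ← hfB, hG]
        simp only
        rw [Finset.mul_sum]
        refine Finset.sum_congr rfl fun σ hσ => ?_
        have hσ' : σ i₀ = zb := by
          rw [hfB, Finset.mem_filter] at hσ; exact hσ.2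
        rw [← Finset.mul_prod_erase Finset.univ
          (fun i => c (σ i) (τ i)) (Finset.mem_univ i₀), hσ', hc0]
        ring
      have hLHSvj : ∑ τ : Fin n → γA, Complex.normSq (∑ σ, vj σ * ∏ i, c (σ i) (τ i))
          = ∑ τ₀ ∈ fA, Complex.normSq (G j τ₀) := by
        simp_rw [hinner_vj]
        rw [sum_split za i₀
          (fun τ => Complex.normSq ((if τ i₀ = za then 1 else 0) * G j τ))]
        rw [Finset.sum_comm]
        refine Finset.sum_congr rfl fun τ₀ hτ₀ => ?_
        rw [Finset.sum_eq_single za]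
        · rw [Function.update_self, if_pos rfl, one_mul, hE2]
        · intro k _ hk
          rw [Function.update_self, if_neg hk, zero_mul]
          simp
        · intro h; exact absurd (Finset.mem_univ za) h
      have hRHSvj : ∑ σ : Fin n → γB, Complex.normSq (vj σ)
          = ∑ σ ∈ fB, Complex.normSq (v (Function.update σ i₀ j)) := by
        rw [hvj]
        simp only
        rw [show (∑ σ : Fin n → γB,
            Complex.normSq (if σ i₀ = zb then v (Function.update σ i₀ j) else 0))
          = ∑ σ : Fin n → γB,
            (if σ i₀ = zb then Complex.normSq (v (Function.update σ i₀ j)) else 0) from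
          Finset.sum_congr rfl fun σ _ => by split <;> simp]
        rw [← Finset.sum_filter, ← hfB]
      rw [← hLHSvj, ← hRHSvj]
      exact hIH
    have step3 : ∑ j, ∑ τ₀ ∈ fA, Complex.normSq (G j τ₀)
        ≤ ρ ^ (2 * S.card) * ∑ σ : Fin n → γB, Complex.normSq (v σ) := by
      refine (Finset.sum_le_sum fun j (_ : j ∈ Finset.univ) => step2 j).trans ?_
      rw [← Finset.mul_sum]
      rw [← sum_split zb i₀ (fun σ => Complex.normSq (v σ))]
    calc ρ ^ 2 * ∑ j, ∑ τ₀ ∈ fA, Complex.normSq (G j τ₀)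
        ≤ ρ ^ 2 * (ρ ^ (2 * S.card) * ∑ σ : Fin n → γB, Complex.normSq (v σ)) := by
          exact mul_le_mul_of_nonneg_left step3 (sq_nonneg ρ)
      _ = ρ ^ (2 * (insert i₀ S).card) * ∑ σ : Fin n → γB, Complex.normSq (v σ) := by
          rw [Finset.card_insert_of_notMem hi₀]
          rw [← mul_assoc, ← pow_add]
          congr 2
          ring
  
end Tensor

end MES

open MES in
set_option maxHeartbeats 2000000 in
/-- The `n`-fold Markov super-operator commutes with the Efron–Stein projections, and
`‖T^{⊗n}(Q[S])‖₂ ≤ ρ^{|S|} ‖Q[S]‖₂` where `ρ` is the maximal correlation of `ψ_{AB}`. -/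
theorem markov_efron_stein (dA dB n : ℕ) (hA : 0 < dA) (hB : 0 < dB)
    (ψ : Matrix (Fin dA × Fin dB) (Fin dA × Fin dB) ℂ)
    (hpsd : ψ.PosSemidef) (htr : ψ.trace = 1)
    (hmargA : Matrix.of (fun a a' : Fin dA => ∑ b, ψ (a, b) (a', b)) =
      (dA : ℂ)⁻¹ • (1 : Matrix (Fin dA) (Fin dA) ℂ))
    (hmargB : Matrix.of (fun b b' : Fin dB => ∑ a, ψ (a, b) (a, b')) =
      (dB : ℂ)⁻¹ • (1 : Matrix (Fin dB) (Fin dB) ℂ))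
    (T : Matrix (Fin dB) (Fin dB) ℂ → Matrix (Fin dA) (Fin dA) ℂ)
    (hT : ∀ (M : Matrix (Fin dA) (Fin dA) ℂ) (Q : Matrix (Fin dB) (Fin dB) ℂ),
      Matrix.trace ((Mᴴ ⊗ₖ Q) * ψ) = Matrix.trace (Mᴴ * T Q) / (dA : ℂ))
    (Tn : Matrix (Fin n → Fin dB) (Fin n → Fin dB) ℂ →
      Matrix (Fin n → Fin dA) (Fin n → Fin dA) ℂ)
    (hTnlin : IsLinearMap ℂ Tn)
    (hTnprod : ∀ Q : Fin n → Matrix (Fin dB) (Fin dB) ℂ,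
      Tn (Matrix.of fun x y => ∏ i, Q i (x i) (y i)) =
        Matrix.of fun x y => ∏ i, T (Q i) (x i) (y i))
    (BA : Fin (dA ^ 2) → Matrix (Fin dA) (Fin dA) ℂ) (hBA : IsStdONB dA BA)
    (BB : Fin (dB ^ 2) → Matrix (Fin dB) (Fin dB) ℂ) (hBB : IsStdONB dB BB)
    (Q : Matrix (Fin n → Fin dB) (Fin n → Fin dB) ℂ) (S : Finset (Fin n)) :
    Tn (esProj BB Q S) = esProj BA (Tn Q) S ∧
    Real.sqrt ((Matrix.trace ((Tn (esProj BB Q S))ᴴ * Tn (esProj BB Q S))).re /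
        ((dA : ℝ) ^ n)) ≤
      maxCorr ψ ^ S.card *
        Real.sqrt ((Matrix.trace ((esProj BB Q S)ᴴ * esProj BB Q S)).re /
          ((dB : ℝ) ^ n)) := by
  have hdAC : ((dA : ℂ)) ^ n ≠ 0 := pow_ne_zero _ (by exact_mod_cast hA.ne')
  have hdBC : ((dB : ℂ)) ^ n ≠ 0 := pow_ne_zero _ (by exact_mod_cast hB.ne')
  set zA : Fin (dA ^ 2) := ⟨0, pow_pos hA 2⟩ with hzA
  set zB : Fin (dB ^ 2) := ⟨0, pow_pos hB 2⟩ with hzB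
  set ρ : ℝ := maxCorr ψ with hρ
  have hρ0 : 0 ≤ ρ := maxCorr_nonneg ψ hA hB hpsd hmargA hmargB
  set c : Fin (dB ^ 2) → Fin (dA ^ 2) → ℂ :=
    fun j k => Matrix.trace ((BA k)ᴴ * T (BB j)) / (dA : ℂ) with hc
  set Qhat : (Fin n → Fin (dB ^ 2)) → ℂ :=
    fun σ => Matrix.trace ((tensorFam BB σ)ᴴ * Q) / (dB : ℂ) ^ n with hQhat
  set filB : (Fin n → Fin (dB ^ 2)) → Finset (Fin n) :=
    fun σ => Finset.univ.filter fun i => (σ i : ℕ) ≠ 0 with hfilB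
  set filA : (Fin n → Fin (dA ^ 2)) → Finset (Fin n) :=
    fun τ => Finset.univ.filter fun i => (τ i : ℕ) ≠ 0 with hfilA
  set v : (Fin n → Fin (dB ^ 2)) → ℂ :=
    fun σ => if filB σ = S then Qhat σ else 0 with hv
  set w : (Fin n → Fin (dA ^ 2)) → ℂ :=
    fun τ => ∑ σ, v σ * ∏ i, c (σ i) (τ i) with hw
  set W : (Fin n → Fin (dA ^ 2)) → ℂ :=
    fun τ => ∑ σ, Qhat σ * ∏ i, c (σ i) (τ i) with hW
  -- basic coefficient facts
  have htrBBj : ∀ j, Matrix.trace (BB j) = if zB = j then (dB : ℂ) else 0 := by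
    intro j
    have := trace_orth hB hBB zB j
    rwa [hBB.2.1 zB rfl, Matrix.conjTranspose_one, Matrix.one_mul] at this
  have hc00 : ∀ k, c zB k = if k = zA then 1 else 0 := by
    intro k
    rw [hc]
    simp only
    rw [hBB.2.1 zB rfl, T_one ψ hA T hT hmargA]
    rw [show (1 : Matrix (Fin dA) (Fin dA) ℂ) = BA zA from (hBA.2.1 zA rfl).symm]
    rw [trace_orth hA hBA]
    by_cases h : k = zA
    · subst h; rw [if_pos rfl, if_pos rfl, div_self (by exact_mod_cast hA.ne')]
    · rw [if_neg h, if_neg h, zero_div]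
  have hc10 : ∀ j, j ≠ zB → c j zA = 0 := by
    intro j hj
    rw [hc]
    simp only
    rw [hBA.2.1 zA rfl, Matrix.conjTranspose_one, Matrix.one_mul,
      T_trace ψ hA T hT (BB j) hB hmargB, htrBBj j, if_neg (Ne.symm hj)]
    simp
  have hprodzero : ∀ (σ : Fin n → Fin (dB ^ 2)) (τ : Fin n → Fin (dA ^ 2)),
      filB σ ≠ filA τ → (∏ i, c (σ i) (τ i)) = 0 := by
    intro σ τ hne
    have : ∃ i, ¬ (i ∈ filB σ ↔ i ∈ filA τ) := by
      by_contra hcon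
      push_neg at hcon
      exact hne (Finset.ext hcon)
    obtain ⟨i, hi⟩ := this
    rw [hfilB, hfilA] at hi
    simp only [Finset.mem_filter, Finset.mem_univ, true_and] at hi
    refine Finset.prod_eq_zero (Finset.mem_univ i) ?_
    rcases Classical.not_iff.1 hi |>.symm |> (fun h => h) with h
    by_cases h1 : (σ i : ℕ) = 0
    · have hσi : σ i = zB := by
        apply Fin.ext; rw [h1, hzB]
      have h2 : (τ i : ℕ) ≠ 0 := by tauto
      have hτi : τ i ≠ zA := by
        intro hcontra; apply h2; rw [hcontra, hzA]
      rw [hσi, hc00, if_neg hτi]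
    · have h2 : (τ i : ℕ) = 0 := by tauto
      have hτi : τ i = zA := by apply Fin.ext; rw [h2, hzA]
      have hσi : σ i ≠ zB := by
        intro hcontra; apply h1; rw [hcontra, hzB]
      rw [hτi, hc10 _ hσi]
  -- representations
  have hES : esProj BB Q S = ∑ σ, v σ • tensorFam BB σ := by
    rw [esProj, Finset.sum_filter]
    refine Finset.sum_congr rfl fun σ _ => ?_
    have hvs : v σ = if (Finset.univ.filter fun i => ((σ i : ℕ) ≠ 0)) = S
        then (Matrix.trace ((tensorFam BB σ)ᴴ * Q) / ((dB : ℂ) ^ n)) else 0 := rfl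
    rw [hvs]
    split <;> simp
  have hX : Tn (esProj BB Q S) = ∑ τ, w τ • tensorFam BA τ := by
    rw [hES, Tn_rep T hA BA hBA BB Tn hTnlin hTnprod v]
  have hTnQ : Tn Q = ∑ τ, W τ • tensorFam BA τ := by
    conv_lhs => rw [bigExpand hB hBB Q]
    rw [Tn_rep T hA BA hBA BB Tn hTnlin hTnprod Qhat]
  have hY : esProj BA (Tn Q) S = ∑ τ, (if filA τ = S then W τ else 0) • tensorFam BA τ := by
    rw [esProj, Finset.sum_filter]
    refine Finset.sum_congr rfl fun τ _ => ?_
    have hcoef : Matrix.trace ((tensorFam BA τ)ᴴ * Tn Q) / (dA : ℂ) ^ n = W τ := by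
      rw [hTnQ, coeff_rep hA hBA W τ, mul_div_cancel_right₀ _ hdAC]
    have hWs : (if filA τ = S then W τ else 0)
        = if (Finset.univ.filter fun i => ((τ i : ℕ) ≠ 0)) = S then W τ else 0 := rfl
    rw [hWs, hcoef]
    split <;> simp
  have hwW : ∀ τ, w τ = if filA τ = S then W τ else 0 := by
    intro τ
    by_cases hτ : filA τ = S
    · rw [if_pos hτ, hw, hW]
      simp only
      refine Finset.sum_congr rfl fun σ _ => ?_
      by_cases hσ : filB σ = S
      · rw [hv]; simp only; rw [if_pos hσ]
      · have : (∏ i, c (σ i) (τ i)) = 0 := hprodzero σ τ (by rw [hτ]; exact hσ)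
        rw [this, mul_zero, mul_zero]
    · rw [if_neg hτ, hw]
      simp only
      refine Finset.sum_eq_zero fun σ _ => ?_
      by_cases hσ : filB σ = S
      · have : (∏ i, c (σ i) (τ i)) = 0 := hprodzero σ τ (by rw [hσ]; exact Ne.symm hτ)
        rw [this, mul_zero]
      · rw [hv]; simp only; rw [if_neg hσ, zero_mul]
  have part1 : Tn (esProj BB Q S) = esProj BA (Tn Q) S := by
    rw [hX, hY]
    exact Finset.sum_congr rfl fun τ _ => by rw [hwW τ]
  refine ⟨part1, ?_⟩
  -- norms via Parseval
  have horthAn : ∀ σ τ : Fin n → Fin (dA ^ 2),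
      Matrix.trace ((tensorFam BA σ)ᴴ * tensorFam BA τ)
        = if σ = τ then (((dA : ℝ) ^ n : ℝ) : ℂ) else 0 := by
    intro σ τ
    rw [trace_tensor_orth hA hBA]
    split <;> [push_cast; skip] <;> rfl
  have horthBn : ∀ σ τ : Fin n → Fin (dB ^ 2),
      Matrix.trace ((tensorFam BB σ)ᴴ * tensorFam BB τ)
        = if σ = τ then (((dB : ℝ) ^ n : ℝ) : ℂ) else 0 := by
    intro σ τ
    rw [trace_tensor_orth hB hBB]
    split <;> [push_cast; skip] <;> rfl
  have hXnorm : Matrix.trace ((Tn (esProj BB Q S))ᴴ * Tn (esProj BB Q S))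
      = (((∑ τ, Complex.normSq (w τ)) * ((dA : ℝ) ^ n) : ℝ) : ℂ) := by
    rw [hX]; exact parseval (tensorFam BA) ((dA : ℝ) ^ n) horthAn w
  have hQnorm : Matrix.trace ((esProj BB Q S)ᴴ * esProj BB Q S)
      = (((∑ σ, Complex.normSq (v σ)) * ((dB : ℝ) ^ n) : ℝ) : ℂ) := by
    rw [hES]; exact parseval (tensorFam BB) ((dB : ℝ) ^ n) horthBn v
  -- tensorized contraction bound
  have hsite' : ∀ u : Fin (dB ^ 2) → ℂ, u zB = 0 →
      ∑ k, Complex.normSq (∑ j, u j * c j k) ≤ ρ ^ 2 * ∑ j, Complex.normSq (u j) := by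
    intro u hu
    have hu' : ∀ j : Fin (dB ^ 2), (j : ℕ) = 0 → u j = 0 := by
      intro j hj
      have : j = zB := by apply Fin.ext; rw [hj, hzB]
      rwa [this]
    exact siteBound ψ hA hB hpsd hmargA hmargB T hT BA hBA BB hBB u hu'
  have hv' : ∀ σ, v σ ≠ 0 → (Finset.univ.filter fun i => σ i ≠ zB) = S := by
    intro σ hσ
    have hfil : (Finset.univ.filter fun i => σ i ≠ zB) = filB σ := by
      rw [hfilB]
      refine Finset.filter_congr fun i _ => ?_
      constructor
      · intro h hcon
        exact h (by apply Fin.ext; rw [hcon, hzB])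
      · intro h hcon
        exact h (by rw [hcon, hzB])
    rw [hfil]
    by_contra hne
    apply hσ
    rw [hv]
    simp only
    rw [if_neg hne]
  have hbound : ∑ τ, Complex.normSq (w τ)
      ≤ ρ ^ (2 * S.card) * ∑ σ, Complex.normSq (v σ) := by
    simp_rw [hw]
    exact tensorBound zB zA c ρ hρ0 hc00 hsite' S v hv'
  -- final計算
  rw [hXnorm, hQnorm, Complex.ofReal_re, Complex.ofReal_re]
  have hdAR : ((dA : ℝ)) ^ n ≠ 0 := pow_ne_zero _ (by exact_mod_cast hA.ne')
  have hdBR : ((dB : ℝ)) ^ n ≠ 0 := pow_ne_zero _ (by exact_mod_cast hB.ne')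
  rw [mul_div_cancel_right₀ _ hdAR, mul_div_cancel_right₀ _ hdBR]
  have h1 : Real.sqrt (∑ τ, Complex.normSq (w τ))
      ≤ Real.sqrt (ρ ^ (2 * S.card) * ∑ σ, Complex.normSq (v σ)) :=
    Real.sqrt_le_sqrt hbound
  refine h1.trans ?_
  rw [show ρ ^ (2 * S.card) = (ρ ^ S.card) ^ 2 by rw [← pow_mul, mul_comm]]
  rw [Real.sqrt_mul (sq_nonneg _), Real.sqrt_sq (pow_nonneg hρ0 _)]
end
end
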